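/- arXiv:2603.23228 — 7 statements merged into one kernel-verified Lean document; each statement's English description precedes it below -/
import Mathlib

section
/- For every n ≥ 1 and every partition λ of n, dim_loc(λ*) = dim_loc(λ), where λ* is the conjugate partition of λ. -/
/-!  Common definitions: the partition graph `Gₙ`, local simplex dimension,
simplex layers, corners, transfers, capacities, and phase boundaries. -/

/-- Vertices of the partition graph: partitions of `n`, encoded as
Young diagrams with `n` cells. -/
abbrev PartitionVertex (n : ℕ) := {μ : YoungDiagram // μ.card = n}

/-- The partition graph `Gₙ`: two distinct partitions of `n` are adjacent iff the
Young diagram of one is obtained from the other by removing one cell and adding one cell. -/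
def partitionGraph (n : ℕ) : SimpleGraph (PartitionVertex n) where
  Adj μ ν := μ ≠ ν ∧ (μ.1.cells \ ν.1.cells).card = 1 ∧ (ν.1.cells \ μ.1.cells).card = 1
  symm := ⟨fun _ _ ⟨h, h1, h2⟩ => ⟨h.symm, h2, h1⟩⟩
  loopless := ⟨fun _ ⟨h, _⟩ => h rfl⟩

/-- `dimLoc n lam` : the largest `d` such that some clique of `Gₙ` of cardinality `d+1`
contains `lam`. -/
noncomputable def dimLoc (n : ℕ) (lam : PartitionVertex n) : ℕ :=
  sSup {d : ℕ | ∃ s : Finset (PartitionVertex n),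
    (partitionGraph n).IsClique (↑s : Set (PartitionVertex n)) ∧ s.card = d + 1 ∧ lam ∈ s}

/-- The simplex layer `L_r(n)`. -/
def layer (n r : ℕ) : Set (PartitionVertex n) := {lam | dimLoc n lam = r}

/-- The upper simplex layer `L_{≥ r}(n)`. -/
def layerGe (n r : ℕ) : Set (PartitionVertex n) := {lam | r ≤ dimLoc n lam}

/-- `Δ(n)` : the maximal local simplex dimension over all partitions of `n`. -/
noncomputable def Delta (n : ℕ) : ℕ := ⨆ lam : PartitionVertex n, dimLoc n lam

/-- The conjugate (transpose) of a partition of `n`, as a vertex of `Gₙ`. -/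
def conjVertex (n : ℕ) (lam : PartitionVertex n) : PartitionVertex n :=
  ⟨lam.1.transpose, by
    simpa [YoungDiagram.transpose, YoungDiagram.card] using lam.2⟩

lemma conjVertex_conjVertex (n : ℕ) (lam : PartitionVertex n) :
    conjVertex n (conjVertex n lam) = lam := by
  simp [conjVertex, YoungDiagram.transpose_transpose]

lemma sdiff_transpose_card (μ ν : YoungDiagram) :
    (μ.transpose.cells \ ν.transpose.cells).card = (μ.cells \ ν.cells).card := by
  have h : μ.transpose.cells \ ν.transpose.cells
      = (μ.cells \ ν.cells).map (Equiv.prodComm ℕ ℕ).toEmbedding := by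
    ext c
    simp only [Finset.mem_sdiff, Finset.mem_map_equiv, YoungDiagram.mem_cells,
      YoungDiagram.mem_transpose]
    rfl
  rw [h, Finset.card_map]

lemma adj_conj (n : ℕ) (μ ν : PartitionVertex n)
    (h : (partitionGraph n).Adj μ ν) :
    (partitionGraph n).Adj (conjVertex n μ) (conjVertex n ν) := by
  obtain ⟨hne, h1, h2⟩ := h
  refine ⟨?_, ?_, ?_⟩
  · intro he
    apply hne
    have := congrArg (conjVertex n) he
    rwa [conjVertex_conjVertex, conjVertex_conjVertex] at this
  · rw [show (conjVertex n μ).1 = μ.1.transpose from rfl,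
      show (conjVertex n ν).1 = ν.1.transpose from rfl, sdiff_transpose_card]
    exact h1
  · rw [show (conjVertex n μ).1 = μ.1.transpose from rfl,
      show (conjVertex n ν).1 = ν.1.transpose from rfl, sdiff_transpose_card]
    exact h2

lemma dimLoc_set_subset (n : ℕ) (lam : PartitionVertex n) :
    {d : ℕ | ∃ s : Finset (PartitionVertex n),
      (partitionGraph n).IsClique (↑s : Set (PartitionVertex n)) ∧ s.card = d + 1 ∧ lam ∈ s} ⊆
    {d : ℕ | ∃ s : Finset (PartitionVertex n),
      (partitionGraph n).IsClique (↑s : Set (PartitionVertex n)) ∧ s.card = d + 1 ∧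
        conjVertex n lam ∈ s} := by
  have hinj : Function.Injective (conjVertex n) := by
    intro a b h
    have := congrArg (conjVertex n) h
    rwa [conjVertex_conjVertex, conjVertex_conjVertex] at this
  rintro d ⟨s, hcl, hcard, hmem⟩
  refine ⟨s.map ⟨conjVertex n, hinj⟩, ?_, by simp [hcard], ?_⟩
  · intro x hx y hy hxy
    simp only [Finset.coe_map, Set.mem_image, Finset.mem_coe] at hx hy
    obtain ⟨a, ha, rfl⟩ := hx
    obtain ⟨b, hb, rfl⟩ := hy
    exact adj_conj n a b (hcl ha hb (fun h => hxy (by rw [h])))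
  · exact Finset.mem_map_of_mem _ hmem

/-- For every `n ≥ 1` and every partition `λ` of `n`,
`dim_loc(λ*) = dim_loc(λ)`. -/
theorem dimLoc_conj (n : ℕ) (hn : 1 ≤ n) (lam : PartitionVertex n) :
    dimLoc n (conjVertex n lam) = dimLoc n lam := by
  unfold dimLoc
  congr 1
  apply Set.Subset.antisymm
  · have h := dimLoc_set_subset n (conjVertex n lam)
    rwa [conjVertex_conjVertex] at h
  · exact dimLoc_set_subset n lam
end

section
/- Let λ be a partition of n with n ≥ 2 and let c be a removable corner of the Young diagram of λ. Then the full star-simplex Σ^star_max(λ,c) = {λ} ∪ {λ(c→a) : a ∈ A_max(λ,c)} is a clique of the partition graph G_n; in particular, for any two distinct addable corners a, a' ∈ A_max(λ,c), the partitions λ(c→a) and λ(c→a') are adjacent in G_n. -/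
/-- `c` is a removable corner of the Young diagram `μ`. -/
def Removable (μ : YoungDiagram) (c : ℕ × ℕ) : Prop :=
  c ∈ μ.cells ∧ IsLowerSet (↑(μ.cells.erase c) : Set (ℕ × ℕ))

/-- `a` is an addable corner of the Young diagram `μ`. -/
def Addable (μ : YoungDiagram) (a : ℕ × ℕ) : Prop :=
  a ∉ μ.cells ∧ IsLowerSet (↑(insert a μ.cells) : Set (ℕ × ℕ))

/-- The cells of `λ(c→a)`: remove the cell `c` and add the cell `a`. -/
def transferCells (μ : YoungDiagram) (c a : ℕ × ℕ) : Finset (ℕ × ℕ) :=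
  insert a (μ.cells.erase c)

/-- The transfer `λ(c→a)` is admissible: the result is again a Young diagram
and is different from `λ`. -/
def Admissible (μ : YoungDiagram) (c a : ℕ × ℕ) : Prop :=
  IsLowerSet (↑(transferCells μ c a) : Set (ℕ × ℕ)) ∧ transferCells μ c a ≠ μ.cells

/-- `A_max(λ,c)`: the addable corners `a` for which `λ(c→a)` is admissible. -/
def Amax (μ : YoungDiagram) (c : ℕ × ℕ) : Set (ℕ × ℕ) :=
  {a | Addable μ a ∧ Admissible μ c a}

/-- `C_max(λ,a)`: the removable corners `c` for which `λ(c→a)` is admissible. -/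
def Cmax (μ : YoungDiagram) (a : ℕ × ℕ) : Set (ℕ × ℕ) :=
  {c | Removable μ c ∧ Admissible μ c a}

/-- The full star-simplex `Σ^star_max(λ,c) = {λ} ∪ {λ(c→a) : a ∈ A_max(λ,c)}`,
as a set of vertices of `Gₙ`. -/
def starSimplex (n : ℕ) (lam : PartitionVertex n) (c : ℕ × ℕ) : Set (PartitionVertex n) :=
  {ν | ν = lam ∨ ∃ a ∈ Amax lam.1 c, ν.1.cells = transferCells lam.1 c a}

/-- The full top-simplex `Σ^top_max(λ,a) = {λ} ∪ {λ(c→a) : c ∈ C_max(λ,a)}`,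
as a set of vertices of `Gₙ`. -/
def topSimplex (n : ℕ) (lam : PartitionVertex n) (a : ℕ × ℕ) : Set (PartitionVertex n) :=
  {ν | ν = lam ∨ ∃ c ∈ Cmax lam.1 a, ν.1.cells = transferCells lam.1 c a}

/-- For `n ≥ 2` and a removable corner `c` of `λ ⊢ n`, the full star-simplex
`Σ^star_max(λ,c)` is a clique of `Gₙ`; in particular, for distinct `a, a' ∈ A_max(λ,c)` the
partitions `λ(c→a)` and `λ(c→a')` are adjacent in `Gₙ`. -/
theorem starSimplex_isClique (n : ℕ) (hn : 2 ≤ n) (lam : PartitionVertex n) (c : ℕ × ℕ)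
    (hc : Removable lam.1 c) :
    (partitionGraph n).IsClique (starSimplex n lam c) ∧
    ∀ a a' : ℕ × ℕ, a ∈ Amax lam.1 c → a' ∈ Amax lam.1 c → a ≠ a' →
      ∀ ν ν' : PartitionVertex n, ν.1.cells = transferCells lam.1 c a →
        ν'.1.cells = transferCells lam.1 c a' → (partitionGraph n).Adj ν ν' := by
  obtain ⟨hcS, -⟩ := hc
  have vne : ∀ ν ν' : PartitionVertex n, ν.1.cells ≠ ν'.1.cells → ν ≠ ν' := by
    intro ν ν' h heq; exact h (by rw [heq])
  -- adjacency between two distinct transfers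
  have key : ∀ a a' : ℕ × ℕ, a ∈ Amax lam.1 c → a' ∈ Amax lam.1 c → a ≠ a' →
      ∀ ν ν' : PartitionVertex n, ν.1.cells = transferCells lam.1 c a →
        ν'.1.cells = transferCells lam.1 c a' → (partitionGraph n).Adj ν ν' := by
    intro a a' ha ha' hne ν ν' hν hν'
    obtain ⟨⟨haS, -⟩, -⟩ := ha
    obtain ⟨⟨ha'S, -⟩, -⟩ := ha'
    have sd : ∀ b b' : ℕ × ℕ, b ∉ lam.1.cells → b' ∉ lam.1.cells → b ≠ b' →
        transferCells lam.1 c b \ transferCells lam.1 c b' = {b} := by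
      intro b b' hb hb' hbb
      ext x
      simp only [transferCells, Finset.mem_sdiff, Finset.mem_insert, Finset.mem_erase,
        Finset.mem_singleton]
      constructor
      · rintro ⟨hx1 | hx1, hx2⟩
        · exact hx1
        · exact absurd (Or.inr hx1) hx2
      · rintro rfl
        refine ⟨Or.inl rfl, ?_⟩
        rintro (rfl | ⟨-, hx⟩)
        · exact hbb rfl
        · exact hb hx
    have h1 : ν.1.cells \ ν'.1.cells = {a} := by rw [hν, hν']; exact sd a a' haS ha'S hne
    have h2 : ν'.1.cells \ ν.1.cells = {a'} := by rw [hν, hν']; exact sd a' a ha'S haS hne.symm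
    refine ⟨vne ν ν' ?_, by rw [h1]; simp, by rw [h2]; simp⟩
    intro h
    have : a ∈ ν'.1.cells := h ▸ (by rw [hν]; exact Finset.mem_insert_self _ _)
    rw [hν'] at this
    rcases Finset.mem_insert.mp this with rfl | hmem
    · exact hne rfl
    · exact haS (Finset.mem_of_mem_erase hmem)
  -- adjacency between a transfer and lam
  have keyL : ∀ a : ℕ × ℕ, a ∈ Amax lam.1 c → ∀ ν : PartitionVertex n,
      ν.1.cells = transferCells lam.1 c a → (partitionGraph n).Adj ν lam := by
    intro a ha ν hν
    obtain ⟨⟨haS, -⟩, -, hadm⟩ := ha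
    have hac : a ≠ c := fun h => haS (h ▸ hcS)
    have h1 : ν.1.cells \ lam.1.cells = {a} := by
      rw [hν]
      ext x
      simp only [transferCells, Finset.mem_sdiff, Finset.mem_insert, Finset.mem_erase,
        Finset.mem_singleton]
      constructor
      · rintro ⟨hx1 | ⟨-, hx1⟩, hx2⟩
        · exact hx1
        · exact absurd hx1 hx2
      · rintro rfl; exact ⟨Or.inl rfl, haS⟩
    have h2 : lam.1.cells \ ν.1.cells = {c} := by
      rw [hν]
      ext x
      simp only [transferCells, Finset.mem_sdiff, Finset.mem_insert, Finset.mem_erase,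
        Finset.mem_singleton]
      constructor
      · rintro ⟨hx1, hx2⟩
        by_contra hxc
        exact hx2 (Or.inr ⟨hxc, hx1⟩)
      · rintro rfl
        refine ⟨hcS, ?_⟩
        rintro (rfl | ⟨hc1, -⟩)
        · exact hac rfl
        · exact hc1 rfl
    exact ⟨vne ν lam (hν ▸ hadm), by rw [h1]; simp, by rw [h2]; simp⟩
  refine ⟨?_, key⟩
  rintro ν (rfl | ⟨a, ha, hν⟩) ν' (rfl | ⟨a', ha', hν'⟩) hnn
  · exact absurd rfl hnn
  · exact ((keyL a' ha' ν' hν').symm)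
  · exact keyL a ha ν hν
  · by_cases h : a = a'
    · subst h
      exact absurd (Subtype.ext (YoungDiagram.ext (hν.trans hν'.symm))) hnn
    · exact key a a' ha ha' h ν ν' hν hν'
end

section
/- Let λ be a partition of n with n ≥ 2 and let a be an addable corner of the Young diagram of λ. Then the full top-simplex Σ^top_max(λ,a) = {λ} ∪ {λ(c→a) : c ∈ C_max(λ,a)} is a clique of the partition graph G_n; in particular, for any two distinct removable corners c, c' ∈ C_max(λ,a), the partitions λ(c→a) and λ(c'→a) are adjacent in G_n. -/
section Aux
variable {s : Finset (ℕ × ℕ)} {a c c' : ℕ × ℕ}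

lemma diff_add (ha : a ∉ s) : (insert a (s.erase c)) \ s = {a} := by
  ext x
  simp only [Finset.mem_sdiff, Finset.mem_insert, Finset.mem_erase, Finset.mem_singleton]
  constructor
  · rintro ⟨h | ⟨_, hx⟩, hns⟩
    · exact h
    · exact absurd hx hns
  · rintro rfl; exact ⟨Or.inl rfl, ha⟩

lemma diff_rem (hc : c ∈ s) (hca : c ≠ a) : s \ (insert a (s.erase c)) = {c} := by
  ext x
  simp only [Finset.mem_sdiff, Finset.mem_insert, Finset.mem_erase, Finset.mem_singleton]
  constructor
  · rintro ⟨hx, h⟩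
    by_contra hxc
    exact h (Or.inr ⟨hxc, hx⟩)
  · rintro rfl
    refine ⟨hc, ?_⟩
    rintro (h | ⟨h, _⟩)
    · exact hca h
    · exact h rfl

lemma diff_trans (hc' : c' ∈ s) (hcc : c ≠ c') (hca : c' ≠ a) :
    (insert a (s.erase c)) \ (insert a (s.erase c')) = {c'} := by
  ext x
  simp only [Finset.mem_sdiff, Finset.mem_insert, Finset.mem_erase, Finset.mem_singleton]
  constructor
  · rintro ⟨h | ⟨hxc, hx⟩, hn⟩
    · exact absurd (Or.inl h) hn
    · by_contra hxc'
      exact hn (Or.inr ⟨hxc', hx⟩)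
  · rintro rfl
    refine ⟨Or.inr ⟨fun h => hcc h.symm, hc'⟩, ?_⟩
    rintro (h | ⟨h, _⟩)
    · exact hca h
    · exact h rfl

end Aux

/-- For `n ≥ 2` and an addable corner `a` of `λ ⊢ n`, the full top-simplex
`Σ^top_max(λ,a)` is a clique of `Gₙ`; in particular, for distinct `c, c' ∈ C_max(λ,a)` the
partitions `λ(c→a)` and `λ(c'→a)` are adjacent in `Gₙ`. -/

theorem topSimplex_isClique (n : ℕ) (hn : 2 ≤ n) (lam : PartitionVertex n) (a : ℕ × ℕ)
    (ha : Addable lam.1 a) :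
    (partitionGraph n).IsClique (topSimplex n lam a) ∧
    ∀ c c' : ℕ × ℕ, c ∈ Cmax lam.1 a → c' ∈ Cmax lam.1 a → c ≠ c' →
      ∀ ν ν' : PartitionVertex n, ν.1.cells = transferCells lam.1 c a →
        ν'.1.cells = transferCells lam.1 c' a → (partitionGraph n).Adj ν ν' := by
  obtain ⟨haN, -⟩ := ha
  have key : ∀ c c' : ℕ × ℕ, c ∈ Cmax lam.1 a → c' ∈ Cmax lam.1 a → c ≠ c' →
      ∀ ν ν' : PartitionVertex n, ν.1.cells = transferCells lam.1 c a →
        ν'.1.cells = transferCells lam.1 c' a → (partitionGraph n).Adj ν ν' := by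
    intro c c' hc hc' hcc ν ν' hν hν'
    have hcμ : c ∈ lam.1.cells := hc.1.1
    have hc'μ : c' ∈ lam.1.cells := hc'.1.1
    have hca : c ≠ a := fun h => haN (h ▸ hcμ)
    have hc'a : c' ≠ a := fun h => haN (h ▸ hc'μ)
    have h1 : ν.1.cells \ ν'.1.cells = {c'} := by
      rw [hν, hν']; exact diff_trans hc'μ hcc hc'a
    have h2 : ν'.1.cells \ ν.1.cells = {c} := by
      rw [hν, hν']; exact diff_trans hcμ (Ne.symm hcc) hca
    refine ⟨fun h => ?_, by rw [h1]; simp, by rw [h2]; simp⟩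
    rw [h] at h1
    simp at h1
  refine ⟨?_, key⟩
  intro ν hν ν' hν' hne
  have adj_lam : ∀ c : ℕ × ℕ, c ∈ Cmax lam.1 a → ∀ ν : PartitionVertex n,
      ν.1.cells = transferCells lam.1 c a → (partitionGraph n).Adj lam ν := by
    intro c hc ν hν
    have hcμ : c ∈ lam.1.cells := hc.1.1
    have hca : c ≠ a := fun h => haN (h ▸ hcμ)
    have h1 : lam.1.cells \ ν.1.cells = {c} := by
      rw [hν]; exact diff_rem hcμ hca
    have h2 : ν.1.cells \ lam.1.cells = {a} := by
      rw [hν]; exact diff_add haN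
    refine ⟨fun h => ?_, by rw [h1]; simp, by rw [h2]; simp⟩
    rw [h] at h1
    simp at h1
  rcases hν with rfl | ⟨c, hc, hνc⟩
  · rcases hν' with rfl | ⟨c', hc', hν'c⟩
    · exact absurd rfl hne
    · exact adj_lam c' hc' ν' hν'c
  · rcases hν' with rfl | ⟨c', hc', hν'c⟩
    · exact ((partitionGraph n).adj_symm (adj_lam c hc ν hνc))
    · have hcc : c ≠ c' := by
        rintro rfl
        apply hne
        exact Subtype.ext (YoungDiagram.ext (hνc.trans hν'c.symm))
      exact key c c' hc hc' hcc ν ν' hνc hν'c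
end

section
/- Let λ be a partition of n with n ≥ 2 and let σ be any clique of the partition graph G_n containing λ. Then σ is contained in a full star-simplex through λ or in a full top-simplex through λ; that is, there exists a removable corner c of λ with σ ⊆ Σ^star_max(λ,c), or there exists an addable corner a of λ with σ ⊆ Σ^top_max(λ,a). -/
/-- A nonempty Young diagram has a removable corner. -/
lemma exists_removable_corner (μ : YoungDiagram) (hμ : μ.cells.Nonempty) :
    ∃ c, Removable μ c := by
  obtain ⟨c, hc, hmax⟩ := Finset.exists_maximal hμ
  refine ⟨c, hc, ?_⟩
  intro y x hxy hy
  simp only [Finset.coe_erase, Set.mem_diff, Set.mem_singleton_iff, Finset.mem_coe] at hy ⊢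
  obtain ⟨hyμ, hyc⟩ := hy
  have hxμ : x ∈ μ.cells := μ.isLowerSet hxy hyμ
  refine ⟨hxμ, ?_⟩
  rintro rfl
  exact hyc (le_antisymm (hmax hyμ hxy) hxy)

/-- Decomposition of a neighbor of `lam` in the partition graph. -/
lemma neighbor_spec (n : ℕ) (lam ν : PartitionVertex n) (hne : ν ≠ lam)
    (c a : ℕ × ℕ)
    (hc : lam.1.cells \ ν.1.cells = {c}) (ha : ν.1.cells \ lam.1.cells = {a}) :
    Removable lam.1 c ∧ Addable lam.1 a ∧ Admissible lam.1 c a ∧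
      ν.1.cells = transferCells lam.1 c a := by
  have hcm : c ∈ lam.1.cells \ ν.1.cells := by rw [hc]; exact Finset.mem_singleton_self c
  have ham : a ∈ ν.1.cells \ lam.1.cells := by rw [ha]; exact Finset.mem_singleton_self a
  rw [Finset.mem_sdiff] at hcm ham
  obtain ⟨hcμ, hcN⟩ := hcm
  obtain ⟨haN, haμ⟩ := ham
  -- membership characterizations
  have hμdiff : ∀ x, x ∈ lam.1.cells → x ∉ ν.1.cells → x = c := by
    intro x h1 h2
    have : x ∈ lam.1.cells \ ν.1.cells := Finset.mem_sdiff.mpr ⟨h1, h2⟩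
    rwa [hc, Finset.mem_singleton] at this
  have hNdiff : ∀ x, x ∈ ν.1.cells → x ∉ lam.1.cells → x = a := by
    intro x h1 h2
    have : x ∈ ν.1.cells \ lam.1.cells := Finset.mem_sdiff.mpr ⟨h1, h2⟩
    rwa [ha, Finset.mem_singleton] at this
  have hN : ν.1.cells = transferCells lam.1 c a := by
    unfold transferCells
    ext x
    simp only [Finset.mem_insert, Finset.mem_erase]
    constructor
    · intro hx
      by_cases hxμ : x ∈ lam.1.cells
      · right
        refine ⟨?_, hxμ⟩
        rintro rfl; exact hcN hx
      · left; exact hNdiff x hx hxμ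
    · rintro (rfl | ⟨hxc, hxμ⟩)
      · exact haN
      · by_contra hxN
        exact hxc (hμdiff x hxμ hxN)
  have hrem : Removable lam.1 c := by
    refine ⟨hcμ, ?_⟩
    intro y x hxy hy
    simp only [Finset.coe_erase, Set.mem_diff, Set.mem_singleton_iff, Finset.mem_coe] at hy ⊢
    obtain ⟨hyμ, hyc⟩ := hy
    have hxμ : x ∈ lam.1.cells := lam.1.isLowerSet hxy hyμ
    refine ⟨hxμ, ?_⟩
    rintro rfl
    -- then c ≤ y, y ∈ ν, so c ∈ ν, contradiction
    have hyN : y ∈ ν.1.cells := by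
      by_contra hyN
      exact hyc (hμdiff y hyμ hyN)
    exact hcN (ν.1.isLowerSet hxy hyN)
  have hadd : Addable lam.1 a := by
    refine ⟨haμ, ?_⟩
    intro y x hxy hy
    simp only [Finset.coe_insert, Set.mem_insert_iff, Finset.mem_coe] at hy ⊢
    rcases hy with rfl | hyμ
    · -- y = a, so x ∈ ν
      have hxN : x ∈ ν.1.cells := ν.1.isLowerSet hxy haN
      by_cases hxμ : x ∈ lam.1.cells
      · right; exact hxμ
      · left; exact hNdiff x hxN hxμ
    · right; exact lam.1.isLowerSet hxy hyμ
  refine ⟨hrem, hadd, ⟨?_, ?_⟩, hN⟩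
  · rw [← hN]; exact ν.1.isLowerSet
  · rw [← hN]
    intro h
    exact hne (Subtype.ext (YoungDiagram.ext h))

/-- Two adjacent neighbors of `lam` share the removed cell or the added cell. -/
lemma same_c_or_same_a (n : ℕ) (lam ν₁ ν₂ : PartitionVertex n)
    (hadj : (partitionGraph n).Adj ν₁ ν₂)
    (c₁ a₁ c₂ a₂ : ℕ × ℕ)
    (hc₁ : lam.1.cells \ ν₁.1.cells = {c₁}) (ha₁ : ν₁.1.cells \ lam.1.cells = {a₁})
    (hc₂ : lam.1.cells \ ν₂.1.cells = {c₂}) (ha₂ : ν₂.1.cells \ lam.1.cells = {a₂}) :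
    c₁ = c₂ ∨ a₁ = a₂ := by
  by_contra h
  push_neg at h
  obtain ⟨hcne, hane⟩ := h
  have hm1 : c₁ ∈ lam.1.cells ∧ c₁ ∉ ν₁.1.cells := by
    have : c₁ ∈ lam.1.cells \ ν₁.1.cells := by rw [hc₁]; exact Finset.mem_singleton_self c₁
    exact Finset.mem_sdiff.mp this
  have hm2 : a₁ ∈ ν₁.1.cells ∧ a₁ ∉ lam.1.cells := by
    have : a₁ ∈ ν₁.1.cells \ lam.1.cells := by rw [ha₁]; exact Finset.mem_singleton_self a₁
    exact Finset.mem_sdiff.mp this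
  have hm3 : c₂ ∈ lam.1.cells ∧ c₂ ∉ ν₂.1.cells := by
    have : c₂ ∈ lam.1.cells \ ν₂.1.cells := by rw [hc₂]; exact Finset.mem_singleton_self c₂
    exact Finset.mem_sdiff.mp this
  have hm4 : a₂ ∈ ν₂.1.cells ∧ a₂ ∉ lam.1.cells := by
    have : a₂ ∈ ν₂.1.cells \ lam.1.cells := by rw [ha₂]; exact Finset.mem_singleton_self a₂
    exact Finset.mem_sdiff.mp this
  -- a₁ ∈ ν₁ \ ν₂
  have h1 : a₁ ∈ ν₁.1.cells \ ν₂.1.cells := by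
    rw [Finset.mem_sdiff]
    refine ⟨hm2.1, fun hmem => ?_⟩
    have : a₁ ∈ ν₂.1.cells \ lam.1.cells := Finset.mem_sdiff.mpr ⟨hmem, hm2.2⟩
    rw [ha₂, Finset.mem_singleton] at this
    exact hane this
  -- c₂ ∈ ν₁ \ ν₂
  have h2 : c₂ ∈ ν₁.1.cells \ ν₂.1.cells := by
    rw [Finset.mem_sdiff]
    refine ⟨?_, hm3.2⟩
    by_contra hmem
    have : c₂ ∈ lam.1.cells \ ν₁.1.cells := Finset.mem_sdiff.mpr ⟨hm3.1, hmem⟩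
    rw [hc₁, Finset.mem_singleton] at this
    exact hcne this.symm
  have hne12 : a₁ ≠ c₂ := fun h => hm2.2 (h ▸ hm3.1)
  have hsub : ({a₁, c₂} : Finset (ℕ × ℕ)) ⊆ ν₁.1.cells \ ν₂.1.cells := by
    intro x hx
    rcases Finset.mem_insert.mp hx with rfl | hx
    · exact h1
    · rw [Finset.mem_singleton] at hx; subst hx; exact h2
  have hcard := Finset.card_le_card hsub
  rw [Finset.card_pair hne12, hadj.2.1] at hcard
  omega

/-- For `n ≥ 2`, every clique `σ` of `Gₙ` containing `λ` is contained in a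
full star-simplex through `λ` or in a full top-simplex through `λ`. -/
theorem clique_subset_star_or_top (n : ℕ) (hn : 2 ≤ n) (lam : PartitionVertex n)
    (σ : Set (PartitionVertex n)) (hσ : (partitionGraph n).IsClique σ) (hlam : lam ∈ σ) :
    (∃ c : ℕ × ℕ, Removable lam.1 c ∧ σ ⊆ starSimplex n lam c) ∨
    (∃ a : ℕ × ℕ, Addable lam.1 a ∧ σ ⊆ topSimplex n lam a) := by
  -- For every ν ∈ σ different from lam, extract the singleton differences.
  have hdata : ∀ ν ∈ σ, ν ≠ lam → ∃ c a : ℕ × ℕ,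
      lam.1.cells \ ν.1.cells = {c} ∧ ν.1.cells \ lam.1.cells = {a} := by
    intro ν hν hne
    have hadj := hσ hlam hν (fun h => hne h.symm)
    obtain ⟨c, hc⟩ := Finset.card_eq_one.mp hadj.2.1
    obtain ⟨a, ha⟩ := Finset.card_eq_one.mp hadj.2.2
    exact ⟨c, a, hc, ha⟩
  by_cases htriv : ∀ ν ∈ σ, ν = lam
  · -- trivial clique {lam}: use any removable corner
    have hne : lam.1.cells.Nonempty := by
      rw [← Finset.card_pos]; rw [show (lam.1.cells.card) = n from lam.2]; omega
    obtain ⟨c, hc⟩ := exists_removable_corner lam.1 hne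
    refine Or.inl ⟨c, hc, fun ν hν => Or.inl (htriv ν hν)⟩
  · push_neg at htriv
    obtain ⟨ν₀, hν₀σ, hν₀ne⟩ := htriv
    obtain ⟨c₀, a₀, hc₀, ha₀⟩ := hdata ν₀ hν₀σ hν₀ne
    obtain ⟨hrem₀, hadd₀, hadm₀, hN₀⟩ := neighbor_spec n lam ν₀ hν₀ne c₀ a₀ hc₀ ha₀
    by_cases hcase : ∀ ν ∈ σ, ν ≠ lam → lam.1.cells \ ν.1.cells = {c₀}
    · -- all neighbors remove the same cell c₀ : star-simplex
      refine Or.inl ⟨c₀, hrem₀, fun ν hν => ?_⟩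
      by_cases hne : ν = lam
      · exact Or.inl hne
      · obtain ⟨c, a, hc, ha⟩ := hdata ν hν hne
        have hcc : c = c₀ := by
          have := (hcase ν hν hne).symm.trans hc
          exact (Finset.singleton_injective this).symm
        subst hcc
        obtain ⟨hrem, hadd, hadm, hN⟩ := neighbor_spec n lam ν hne c a hc ha
        exact Or.inr ⟨a, ⟨hadd, hadm⟩, hN⟩
    · -- some neighbor removes a different cell: top-simplex with added cell a₀
      push_neg at hcase
      obtain ⟨ν₁, hν₁σ, hν₁ne, hν₁c⟩ := hcase
      obtain ⟨c₁, a₁, hc₁, ha₁⟩ := hdata ν₁ hν₁σ hν₁ne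
      have hc₁ne : c₁ ≠ c₀ := by
        rintro rfl; exact hν₁c hc₁
      have hν₁ν₀ : ν₁ ≠ ν₀ := by
        rintro rfl
        exact hν₁c hc₀
      have ha₁a₀ : a₁ = a₀ := by
        rcases same_c_or_same_a n lam ν₁ ν₀ (hσ hν₁σ hν₀σ hν₁ν₀) c₁ a₁ c₀ a₀
          hc₁ ha₁ hc₀ ha₀ with h | h
        · exact absurd h hc₁ne
        · exact h
      refine Or.inr ⟨a₀, hadd₀, fun ν hν => ?_⟩
      by_cases hne : ν = lam
      · exact Or.inl hne
      · obtain ⟨c, a, hc, ha⟩ := hdata ν hν hne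
        obtain ⟨hrem, hadd, hadm, hN⟩ := neighbor_spec n lam ν hne c a hc ha
        have haa : a = a₀ := by
          by_cases hνν₀ : ν = ν₀
          · subst hνν₀
            have := ha.symm.trans ha₀
            exact Finset.singleton_injective this
          · rcases same_c_or_same_a n lam ν ν₀ (hσ hν hν₀σ hνν₀) c a c₀ a₀
              hc ha hc₀ ha₀ with h | h
            · -- c = c₀ : compare with ν₁ instead
              subst h
              have hνν₁ : ν ≠ ν₁ := by
                rintro rfl
                exact hν₁c hc
              rcases same_c_or_same_a n lam ν ν₁ (hσ hν hν₁σ hνν₁) c a c₁ a₁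
                hc ha hc₁ ha₁ with h' | h'
              · exact absurd h'.symm hc₁ne
              · exact h'.trans ha₁a₀
            · exact h
        subst haa
        exact Or.inr ⟨c, ⟨hrem, hadm⟩, hN⟩
end

section
/- For every n ≥ 2 and every partition λ of n, dim_loc(λ) = max(1, s(λ), t(λ)), where s(λ) and t(λ) are the star and top capacities of λ. In particular, for every r ≥ 2, dim_loc(λ) ≥ r if and only if s(λ) ≥ r or t(λ) ≥ r. -/
/-- The star capacity `s(λ) = max over removable corners c of |A_max(λ,c)|`. -/
noncomputable def starCap (μ : YoungDiagram) : ℕ :=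
  sSup {k | ∃ c : ℕ × ℕ, Removable μ c ∧ (Amax μ c).ncard = k}

/-- The top capacity `t(λ) = max over addable corners a of |C_max(λ,a)|`. -/
noncomputable def topCap (μ : YoungDiagram) : ℕ :=
  sSup {k | ∃ a : ℕ × ℕ, Addable μ a ∧ (Cmax μ a).ncard = k}

section Aux2
set_option linter.unusedVariables false
open Finset
variable {μ : YoungDiagram} {c a a' c' : ℕ × ℕ}

lemma transfer_sdiff_left (hc : c ∈ μ.cells) (ha : a ∉ μ.cells) :
    μ.cells \ transferCells μ c a = {c} := by
  ext x
  simp only [transferCells, Finset.mem_sdiff, Finset.mem_insert, Finset.mem_erase,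
    Finset.mem_singleton]
  constructor
  · rintro ⟨hx, h2⟩
    by_contra h
    exact h2 (Or.inr ⟨h, hx⟩)
  · rintro rfl
    refine ⟨hc, ?_⟩
    rintro (rfl | ⟨hne, _⟩)
    · exact ha hc
    · exact hne rfl

lemma transfer_sdiff_right (hc : c ∈ μ.cells) (ha : a ∉ μ.cells) :
    transferCells μ c a \ μ.cells = {a} := by
  ext x
  simp only [transferCells, Finset.mem_sdiff, Finset.mem_insert, Finset.mem_erase,
    Finset.mem_singleton]
  constructor
  · rintro ⟨(rfl | ⟨_, hx⟩), hn⟩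
    · rfl
    · exact absurd hx hn
  · rintro rfl
    exact ⟨Or.inl rfl, ha⟩

lemma transfer_sdiff_star (ha : a ∉ μ.cells) (ha' : a' ∉ μ.cells) (hne : a ≠ a') :
    transferCells μ c a \ transferCells μ c a' = {a} := by
  ext x
  simp only [transferCells, Finset.mem_sdiff, Finset.mem_insert, Finset.mem_erase,
    Finset.mem_singleton]
  constructor
  · rintro ⟨(rfl | hx), hn⟩
    · rfl
    · exact absurd (Or.inr hx) hn
  · rintro rfl
    refine ⟨Or.inl rfl, ?_⟩
    rintro (rfl | ⟨_, hx⟩)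
    · exact hne rfl
    · exact ha (Finset.mem_of_mem_erase (Finset.mem_erase.mpr ⟨‹_›, hx⟩))

lemma transfer_sdiff_top (hc : c ∈ μ.cells) (hc' : c' ∈ μ.cells) (hcc : c ≠ c')
    (ha : a ∉ μ.cells) :
    transferCells μ c a \ transferCells μ c' a = {c'} := by
  ext x
  simp only [transferCells, Finset.mem_sdiff, Finset.mem_insert, Finset.mem_erase,
    Finset.mem_singleton]
  constructor
  · rintro ⟨(rfl | ⟨hxc, hx⟩), hn⟩
    · exact absurd (Or.inl rfl) hn
    · by_contra h
      exact hn (Or.inr ⟨h, hx⟩)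
  · rintro rfl
    refine ⟨Or.inr ⟨fun h => hcc h.symm, hc'⟩, ?_⟩
    rintro (rfl | ⟨hne, _⟩)
    · exact ha hc'
    · exact hne rfl

lemma transfer_card (hc : c ∈ μ.cells) (ha : a ∉ μ.cells) :
    (transferCells μ c a).card = μ.card := by
  have h1 : a ∉ μ.cells.erase c := fun h => ha (Finset.mem_of_mem_erase h)
  have h2 : 1 ≤ μ.cells.card := Finset.card_pos.mpr ⟨c, hc⟩
  rw [transferCells, Finset.card_insert_of_notMem h1, Finset.card_erase_of_mem hc]
  show μ.cells.card - 1 + 1 = μ.cells.card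
  omega

variable {μ : YoungDiagram} {c a : ℕ × ℕ}

lemma yd_ext {ν : YoungDiagram} (h : μ.cells = ν.cells) : μ = ν := by ext x; rw [h]

lemma removable_of_maximal (hc : c ∈ μ.cells) (hmax : ∀ x ∈ μ.cells, ¬ c < x) :
    Removable μ c := by
  refine ⟨hc, fun p q hqp hp => ?_⟩
  simp only [Finset.coe_erase, Set.mem_diff, Finset.mem_coe, Set.mem_singleton_iff] at hp ⊢
  obtain ⟨hpμ, hpc⟩ := hp
  refine ⟨μ.isLowerSet hqp hpμ, ?_⟩
  rintro rfl
  exact hmax p hpμ (lt_of_le_of_ne hqp (fun h => hpc h.symm))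

lemma addable_fst_le (h : Addable μ a) : a.1 ≤ μ.card := by
  have hsub : (Finset.range a.1).image (fun k => ((k, a.2) : ℕ × ℕ)) ⊆ μ.cells := by
    intro x hx
    simp only [Finset.mem_image, Finset.mem_range] at hx
    obtain ⟨k, hk, rfl⟩ := hx
    have hle : ((k, a.2) : ℕ × ℕ) ≤ a := Prod.le_def.mpr ⟨hk.le, le_rfl⟩
    have hm : ((k, a.2) : ℕ × ℕ) ∈ (↑(insert a μ.cells) : Set (ℕ × ℕ)) :=
      h.2 hle (by simp)
    simp only [Finset.coe_insert, Set.mem_insert_iff, Finset.mem_coe] at hm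
    rcases hm with heq | hm
    · exact absurd (congrArg Prod.fst heq) (by simp; omega)
    · exact hm
  have hinj : Function.Injective (fun k => ((k, a.2) : ℕ × ℕ)) := by
    intro x y hxy; simpa using congrArg Prod.fst hxy
  calc a.1 = ((Finset.range a.1).image (fun k => ((k, a.2) : ℕ × ℕ))).card := by
        rw [Finset.card_image_of_injective _ hinj, Finset.card_range]
    _ ≤ μ.cells.card := Finset.card_le_card hsub

lemma addable_snd_le (h : Addable μ a) : a.2 ≤ μ.card := by
  have hsub : (Finset.range a.2).image (fun k => ((a.1, k) : ℕ × ℕ)) ⊆ μ.cells := by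
    intro x hx
    simp only [Finset.mem_image, Finset.mem_range] at hx
    obtain ⟨k, hk, rfl⟩ := hx
    have hle : ((a.1, k) : ℕ × ℕ) ≤ a := Prod.le_def.mpr ⟨le_rfl, hk.le⟩
    have hm : ((a.1, k) : ℕ × ℕ) ∈ (↑(insert a μ.cells) : Set (ℕ × ℕ)) :=
      h.2 hle (by simp)
    simp only [Finset.coe_insert, Set.mem_insert_iff, Finset.mem_coe] at hm
    rcases hm with heq | hm
    · exact absurd (congrArg Prod.snd heq) (by simp; omega)
    · exact hm
  have hinj : Function.Injective (fun k => ((a.1, k) : ℕ × ℕ)) := by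
    intro x y hxy; simpa using congrArg Prod.snd hxy
  calc a.2 = ((Finset.range a.2).image (fun k => ((a.1, k) : ℕ × ℕ))).card := by
        rw [Finset.card_image_of_injective _ hinj, Finset.card_range]
    _ ≤ μ.cells.card := Finset.card_le_card hsub

lemma amax_subset (c : ℕ × ℕ) :
    Amax μ c ⊆ Set.Icc ((0,0) : ℕ × ℕ) (μ.card, μ.card) := by
  intro a ha
  exact Set.mem_Icc.mpr ⟨Prod.le_def.mpr ⟨Nat.zero_le _, Nat.zero_le _⟩,
    Prod.le_def.mpr ⟨addable_fst_le ha.1, addable_snd_le ha.1⟩⟩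

lemma amax_finite (c : ℕ × ℕ) : (Amax μ c).Finite :=
  (Set.finite_Icc _ _).subset (amax_subset c)

lemma cmax_finite (a : ℕ × ℕ) : (Cmax μ a).Finite :=
  μ.cells.finite_toSet.subset (fun c hc => hc.1.1)

lemma bddAbove_starSet :
    BddAbove {k | ∃ c : ℕ × ℕ, Removable μ c ∧ (Amax μ c).ncard = k} := by
  refine ⟨(Set.Icc ((0,0) : ℕ × ℕ) (μ.card, μ.card)).ncard, ?_⟩
  rintro k ⟨c, _, rfl⟩
  exact Set.ncard_le_ncard (amax_subset c) (Set.finite_Icc _ _)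

lemma bddAbove_topSet :
    BddAbove {k | ∃ a : ℕ × ℕ, Addable μ a ∧ (Cmax μ a).ncard = k} := by
  refine ⟨μ.card, ?_⟩
  rintro k ⟨a, _, rfl⟩
  calc (Cmax μ a).ncard ≤ (↑μ.cells : Set (ℕ × ℕ)).ncard :=
        Set.ncard_le_ncard (fun c hc => hc.1.1) μ.cells.finite_toSet
    _ = μ.card := by rw [Set.ncard_coe_finset]


end Aux2


section Graph
set_option linter.unusedVariables false
variable {n : ℕ}

lemma vertex_ne_of_cells_ne {u v : PartitionVertex n} (h : u.1.cells ≠ v.1.cells) : u ≠ v :=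
  fun he => h (by rw [he])

lemma vertex_eq_of_cells_eq {u v : PartitionVertex n} (h : u.1.cells = v.1.cells) : u = v :=
  Subtype.ext (yd_ext h)

lemma adj_of_transfer (lam ν : PartitionVertex n) {c a : ℕ × ℕ}
    (hc : c ∈ lam.1.cells) (ha : a ∉ lam.1.cells)
    (hcells : ν.1.cells = transferCells lam.1 c a) :
    (partitionGraph n).Adj lam ν := by
  refine ⟨?_, ?_, ?_⟩
  · intro h
    have : a ∈ lam.1.cells := by
      rw [h, hcells]; exact Finset.mem_insert_self _ _
    exact ha this
  · rw [hcells, transfer_sdiff_left hc ha, Finset.card_singleton]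
  · rw [hcells, transfer_sdiff_right hc ha, Finset.card_singleton]

lemma adj_star_pair (ν ν' : PartitionVertex n) {lam : PartitionVertex n} {c a a' : ℕ × ℕ}
    (ha : a ∉ lam.1.cells) (ha' : a' ∉ lam.1.cells) (hne : a ≠ a')
    (h1 : ν.1.cells = transferCells lam.1 c a) (h2 : ν'.1.cells = transferCells lam.1 c a') :
    (partitionGraph n).Adj ν ν' := by
  refine ⟨?_, ?_, ?_⟩
  · apply vertex_ne_of_cells_ne
    rw [h1, h2]
    intro h
    have : a ∈ transferCells lam.1 c a' := h ▸ Finset.mem_insert_self _ _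
    rcases Finset.mem_insert.mp this with rfl | hmem
    · exact hne rfl
    · exact ha (Finset.mem_of_mem_erase hmem)
  · rw [h1, h2, transfer_sdiff_star ha ha' hne, Finset.card_singleton]
  · rw [h1, h2, transfer_sdiff_star ha' ha (Ne.symm hne), Finset.card_singleton]

lemma adj_top_pair (ν ν' : PartitionVertex n) {lam : PartitionVertex n} {c c' a : ℕ × ℕ}
    (hc : c ∈ lam.1.cells) (hc' : c' ∈ lam.1.cells) (hne : c ≠ c') (ha : a ∉ lam.1.cells)
    (h1 : ν.1.cells = transferCells lam.1 c a) (h2 : ν'.1.cells = transferCells lam.1 c' a) :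
    (partitionGraph n).Adj ν ν' := by
  refine ⟨?_, ?_, ?_⟩
  · apply vertex_ne_of_cells_ne
    rw [h1, h2]
    intro h
    have hmem2 : c' ∈ transferCells lam.1 c' a := by
      rw [← h]
      exact Finset.mem_insert.mpr (Or.inr (Finset.mem_erase.mpr ⟨Ne.symm hne, hc'⟩))
    rcases Finset.mem_insert.mp hmem2 with heq | hmem
    · exact ha (heq ▸ hc')
    · exact (Finset.mem_erase.mp hmem).1 rfl
  · rw [h1, h2, transfer_sdiff_top hc hc' hne ha, Finset.card_singleton]
  · rw [h1, h2, transfer_sdiff_top hc' hc (Ne.symm hne) ha, Finset.card_singleton]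

lemma neighbor_structure (lam ν : PartitionVertex n) (h : (partitionGraph n).Adj lam ν) :
    ∃ c a : ℕ × ℕ, Removable lam.1 c ∧ a ∈ Amax lam.1 c ∧
      ν.1.cells = transferCells lam.1 c a := by
  obtain ⟨hne, h1, h2⟩ := h
  obtain ⟨c, hc⟩ := Finset.card_eq_one.mp h1
  obtain ⟨a, ha⟩ := Finset.card_eq_one.mp h2
  have hcmem : c ∈ lam.1.cells ∧ c ∉ ν.1.cells := by
    have : c ∈ lam.1.cells \ ν.1.cells := by rw [hc]; exact Finset.mem_singleton_self c
    exact Finset.mem_sdiff.mp this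
  have hamem : a ∈ ν.1.cells ∧ a ∉ lam.1.cells := by
    have : a ∈ ν.1.cells \ lam.1.cells := by rw [ha]; exact Finset.mem_singleton_self a
    exact Finset.mem_sdiff.mp this
  have hinν : ∀ x, x ∈ lam.1.cells → x ≠ c → x ∈ ν.1.cells := by
    intro x hx hxc
    by_contra hxν
    have : x ∈ lam.1.cells \ ν.1.cells := Finset.mem_sdiff.mpr ⟨hx, hxν⟩
    rw [hc] at this
    exact hxc (Finset.mem_singleton.mp this)
  have hcells : ν.1.cells = transferCells lam.1 c a := by
    ext x
    simp only [transferCells, Finset.mem_insert, Finset.mem_erase]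
    constructor
    · intro hx
      by_cases hxl : x ∈ lam.1.cells
      · refine Or.inr ⟨?_, hxl⟩
        rintro rfl
        exact hcmem.2 hx
      · left
        have : x ∈ ν.1.cells \ lam.1.cells := Finset.mem_sdiff.mpr ⟨hx, hxl⟩
        rw [ha] at this
        exact Finset.mem_singleton.mp this
    · rintro (rfl | ⟨hxc, hxl⟩)
      · exact hamem.1
      · exact hinν x hxl hxc
  have hrem : Removable lam.1 c := by
    refine ⟨hcmem.1, fun p q hqp hp => ?_⟩
    simp only [Finset.coe_erase, Set.mem_diff, Finset.mem_coe, Set.mem_singleton_iff] at hp ⊢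
    obtain ⟨hpl, hpc⟩ := hp
    refine ⟨lam.1.isLowerSet hqp hpl, ?_⟩
    rintro rfl
    have hpν : p ∈ ν.1.cells := hinν p hpl hpc
    exact hcmem.2 (ν.1.isLowerSet hqp hpν)
  have hadd : Addable lam.1 a := by
    refine ⟨hamem.2, fun p q hqp hp => ?_⟩
    simp only [Finset.coe_insert, Set.mem_insert_iff, Finset.mem_coe] at hp ⊢
    rcases hp with rfl | hpl
    · have hqν : q ∈ ν.1.cells := ν.1.isLowerSet hqp hamem.1
      rw [hcells] at hqν
      rcases Finset.mem_insert.mp hqν with rfl | hmem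
      · exact Or.inl rfl
      · exact Or.inr (Finset.mem_of_mem_erase hmem)
    · exact Or.inr (lam.1.isLowerSet hqp hpl)
  refine ⟨c, a, hrem, ⟨hadd, ?_, ?_⟩, hcells⟩
  · rw [← hcells]; exact ν.1.isLowerSet
  · rw [← hcells]
    intro hEq
    exact hne (vertex_eq_of_cells_eq hEq.symm)

end Graph


section Cliques
set_option linter.unusedVariables false
variable {n : ℕ}

lemma le_starCap {μ : YoungDiagram} {c : ℕ × ℕ} (hc : Removable μ c) :
    (Amax μ c).ncard ≤ starCap μ :=
  le_csSup bddAbove_starSet ⟨c, hc, rfl⟩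

lemma le_topCap {μ : YoungDiagram} {a : ℕ × ℕ} (ha : Addable μ a) :
    (Cmax μ a).ncard ≤ topCap μ :=
  le_csSup bddAbove_topSet ⟨a, ha, rfl⟩

lemma star_clique (lam : PartitionVertex n) {c : ℕ × ℕ} (hc : Removable lam.1 c) :
    ∃ s : Finset (PartitionVertex n),
      (partitionGraph n).IsClique (↑s : Set (PartitionVertex n)) ∧
      s.card = (Amax lam.1 c).ncard + 1 ∧ lam ∈ s := by
  classical
  have hfin := amax_finite (μ := lam.1) c
  have hmem : ∀ x : {a // a ∈ hfin.toFinset}, x.1 ∈ Amax lam.1 c :=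
    fun x => hfin.mem_toFinset.mp x.2
  let f : {a // a ∈ hfin.toFinset} → PartitionVertex n := fun x =>
    ⟨⟨transferCells lam.1 c x.1, (hmem x).2.1⟩, by
      show (transferCells lam.1 c x.1).card = n
      rw [transfer_card hc.1 (hmem x).1.1]
      exact lam.2⟩
  have hfc : ∀ x, (f x).1.cells = transferCells lam.1 c x.1 := fun x => rfl
  have hfinj : Function.Injective f := by
    intro x y hxy
    have hcc : transferCells lam.1 c x.1 = transferCells lam.1 c y.1 := by
      rw [← hfc x, ← hfc y, hxy]
    have hx : x.1 ∈ transferCells lam.1 c y.1 := by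
      rw [← hcc]; exact Finset.mem_insert_self _ _
    rcases Finset.mem_insert.mp hx with heq | hmm
    · exact Subtype.ext heq
    · exact absurd (Finset.mem_of_mem_erase hmm) (hmem x).1.1
  have hlamnot : lam ∉ Finset.image f Finset.univ := by
    simp only [Finset.mem_image, Finset.mem_univ, true_and]
    rintro ⟨x, hx⟩
    exact (hmem x).2.2 (by rw [← hfc x, hx])
  refine ⟨insert lam (Finset.image f Finset.univ), ?_, ?_, Finset.mem_insert_self _ _⟩
  · intro u hu v hv huv
    simp only [Finset.coe_insert, Set.mem_insert_iff, Finset.coe_image, Set.mem_image,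
      Finset.mem_coe, Finset.mem_univ] at hu hv
    rcases hu with rfl | ⟨x, _, rfl⟩
    · rcases hv with rfl | ⟨y, _, rfl⟩
      · exact absurd rfl huv
      · exact adj_of_transfer u (f y) hc.1 (hmem y).1.1 (hfc y)
    · rcases hv with rfl | ⟨y, _, rfl⟩
      · exact ((partitionGraph n).adj_symm (adj_of_transfer v (f x) hc.1 (hmem x).1.1 (hfc x)))
      · have hxy : x.1 ≠ y.1 := by
          intro h
          exact huv (congrArg f (Subtype.ext h))
        exact adj_star_pair (f x) (f y) (hmem x).1.1 (hmem y).1.1 hxy (hfc x) (hfc y)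
  · rw [Finset.card_insert_of_notMem hlamnot,
      Finset.card_image_of_injective _ hfinj, Finset.card_univ, Fintype.card_coe,
      Set.ncard_eq_toFinset_card _ hfin]

lemma top_clique (lam : PartitionVertex n) {a : ℕ × ℕ} (ha : Addable lam.1 a) :
    ∃ s : Finset (PartitionVertex n),
      (partitionGraph n).IsClique (↑s : Set (PartitionVertex n)) ∧
      s.card = (Cmax lam.1 a).ncard + 1 ∧ lam ∈ s := by
  classical
  have hfin := cmax_finite (μ := lam.1) a
  have hmem : ∀ x : {c // c ∈ hfin.toFinset}, x.1 ∈ Cmax lam.1 a :=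
    fun x => hfin.mem_toFinset.mp x.2
  let f : {c // c ∈ hfin.toFinset} → PartitionVertex n := fun x =>
    ⟨⟨transferCells lam.1 x.1 a, (hmem x).2.1⟩, by
      show (transferCells lam.1 x.1 a).card = n
      rw [transfer_card (hmem x).1.1 ha.1]
      exact lam.2⟩
  have hfc : ∀ x, (f x).1.cells = transferCells lam.1 x.1 a := fun x => rfl
  have hfinj : Function.Injective f := by
    intro x y hxy
    have hcc : transferCells lam.1 x.1 a = transferCells lam.1 y.1 a := by
      rw [← hfc x, ← hfc y, hxy]
    by_contra hne
    have hne' : y.1 ≠ x.1 := fun h => hne (Subtype.ext h.symm)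
    have hy : y.1 ∈ transferCells lam.1 x.1 a :=
      Finset.mem_insert.mpr (Or.inr (Finset.mem_erase.mpr ⟨hne', (hmem y).1.1⟩))
    rw [hcc] at hy
    rcases Finset.mem_insert.mp hy with heq | hmm
    · exact ha.1 (heq ▸ (hmem y).1.1)
    · exact (Finset.mem_erase.mp hmm).1 rfl
  have hlamnot : lam ∉ Finset.image f Finset.univ := by
    simp only [Finset.mem_image, Finset.mem_univ, true_and]
    rintro ⟨x, hx⟩
    exact (hmem x).2.2 (by rw [← hfc x, hx])
  refine ⟨insert lam (Finset.image f Finset.univ), ?_, ?_, Finset.mem_insert_self _ _⟩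
  · intro u hu v hv huv
    simp only [Finset.coe_insert, Set.mem_insert_iff, Finset.coe_image, Set.mem_image,
      Finset.mem_coe, Finset.mem_univ] at hu hv
    rcases hu with rfl | ⟨x, _, rfl⟩
    · rcases hv with rfl | ⟨y, _, rfl⟩
      · exact absurd rfl huv
      · exact adj_of_transfer u (f y) (hmem y).1.1 ha.1 (hfc y)
    · rcases hv with rfl | ⟨y, _, rfl⟩
      · exact ((partitionGraph n).adj_symm (adj_of_transfer v (f x) (hmem x).1.1 ha.1 (hfc x)))
      · have hxy : x.1 ≠ y.1 := by
          intro h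
          exact huv (congrArg f (Subtype.ext h))
        exact adj_top_pair (f x) (f y) (hmem x).1.1 (hmem y).1.1 hxy ha.1 (hfc x) (hfc y)
  · rw [Finset.card_insert_of_notMem hlamnot,
      Finset.card_image_of_injective _ hfinj, Finset.card_univ, Fintype.card_coe,
      Set.ncard_eq_toFinset_card _ hfin]

end Cliques


section Exists
set_option linter.unusedVariables false
variable {μ : YoungDiagram}

lemma addable_bottomleft (μ : YoungDiagram) : Addable μ (μ.colLen 0, 0) := by
  constructor
  · rw [YoungDiagram.mem_cells, YoungDiagram.mem_iff_lt_colLen]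
    exact lt_irrefl _
  · intro p q hqp hp
    simp only [Finset.coe_insert, Set.mem_insert_iff, Finset.mem_coe] at hp ⊢
    rcases hp with rfl | hpm
    · obtain ⟨q1, q2⟩ := q
      obtain ⟨hq1, hq2⟩ := Prod.le_def.mp hqp
      simp only at hq1 hq2
      have hq2' : q2 = 0 := Nat.le_zero.mp hq2
      subst hq2'
      rcases Nat.lt_or_ge q1 (μ.colLen 0) with h | h
      · right; rw [YoungDiagram.mem_cells, YoungDiagram.mem_iff_lt_colLen]; exact h
      · left; have : q1 = μ.colLen 0 := le_antisymm hq1 h; rw [this]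
    · exact Or.inr (μ.isLowerSet hqp hpm)

lemma exists_transfer (h2 : 2 ≤ μ.card) :
    ∃ c a : ℕ × ℕ, Removable μ c ∧ a ∈ Amax μ c := by
  have hne : μ.cells.Nonempty := Finset.card_pos.mp (by
    show 0 < μ.cells.card
    have : μ.card = μ.cells.card := rfl
    omega)
  obtain ⟨c, hc, hmax'⟩ := μ.cells.exists_maximal hne
  have hmax : ∀ x ∈ μ.cells, ¬ c < x := fun x hx hlt => (lt_iff_le_not_ge.mp hlt).2 (hmax' hx hlt.le)
  have hrem := removable_of_maximal hc hmax
  have herase : ∀ p q : ℕ × ℕ, q ≤ p → p ∈ μ.cells.erase c → q ∈ μ.cells.erase c := by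
    intro p q hqp hp
    rw [Finset.mem_erase] at hp ⊢
    refine ⟨?_, μ.isLowerSet hqp hp.2⟩
    rintro rfl
    exact hmax p hp.2 (lt_of_le_of_ne hqp (fun h => hp.1 h.symm))
  by_cases hc1 : c.1 = 0
  · set h0 := μ.colLen 0 with hh0
    have hane : (h0, 0) ∉ μ.cells := by
      rw [YoungDiagram.mem_cells, YoungDiagram.mem_iff_lt_colLen]; exact lt_irrefl _
    have hc2pos : 1 ≤ c.2 := by
      by_contra h
      have hc2 : c.2 = 0 := by omega
      have hceq : c = (0, 0) := Prod.ext hc1 hc2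
      have hsub : μ.cells ⊆ {((0,0) : ℕ × ℕ)} := by
        intro x hx
        rw [Finset.mem_singleton]
        by_contra hxne
        have h00 : ((0,0) : ℕ × ℕ) ≤ x := Prod.le_def.mpr ⟨Nat.zero_le _, Nat.zero_le _⟩
        have hlt : c < x := by
          rw [hceq]; exact lt_of_le_of_ne h00 (fun h => hxne h.symm)
        exact hmax x hx hlt
      have hcard := Finset.card_le_card hsub
      rw [Finset.card_singleton] at hcard
      have : μ.card = μ.cells.card := rfl
      omega
    refine ⟨c, (h0, 0), hrem, ⟨addable_bottomleft μ, ?_, ?_⟩⟩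
    · intro p q hqp hp
      simp only [transferCells, Finset.coe_insert, Set.mem_insert_iff, Finset.mem_coe] at hp ⊢
      rcases hp with rfl | hpe
      · obtain ⟨q1, q2⟩ := q
        obtain ⟨hq1, hq2⟩ := Prod.le_def.mp hqp
        simp only at hq1 hq2
        have hq2' : q2 = 0 := Nat.le_zero.mp hq2
        subst hq2'
        rcases Nat.lt_or_ge q1 h0 with h | h
        · right
          rw [Finset.mem_erase]
          constructor
          · intro hqc
            apply absurd hc2pos
            rw [← hqc]
            simp
          · rw [YoungDiagram.mem_cells, YoungDiagram.mem_iff_lt_colLen]; exact h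
        · left; have : q1 = h0 := le_antisymm hq1 h; rw [this]
      · exact Or.inr (herase p q hqp hpe)
    · intro hEq
      exact hane (by rw [← hEq]; exact Finset.mem_insert_self _ _)
  · set w := μ.rowLen 0 with hw
    have hane : (0, w) ∉ μ.cells := by
      rw [YoungDiagram.mem_cells, YoungDiagram.mem_iff_lt_rowLen]; exact lt_irrefl _
    refine ⟨c, (0, w), hrem, ⟨⟨hane, ?_⟩, ?_, ?_⟩⟩
    · intro p q hqp hp
      simp only [Finset.coe_insert, Set.mem_insert_iff, Finset.mem_coe] at hp ⊢
      rcases hp with rfl | hpm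
      · obtain ⟨q1, q2⟩ := q
        obtain ⟨hq1, hq2⟩ := Prod.le_def.mp hqp
        simp only at hq1 hq2
        have hq1' : q1 = 0 := Nat.le_zero.mp hq1
        subst hq1'
        rcases Nat.lt_or_ge q2 w with h | h
        · right; rw [YoungDiagram.mem_cells, YoungDiagram.mem_iff_lt_rowLen]; exact h
        · left; have : q2 = w := le_antisymm hq2 h; rw [this]
      · exact Or.inr (μ.isLowerSet hqp hpm)
    · intro p q hqp hp
      simp only [transferCells, Finset.coe_insert, Set.mem_insert_iff, Finset.mem_coe] at hp ⊢
      rcases hp with rfl | hpe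
      · obtain ⟨q1, q2⟩ := q
        obtain ⟨hq1, hq2⟩ := Prod.le_def.mp hqp
        simp only at hq1 hq2
        have hq1' : q1 = 0 := Nat.le_zero.mp hq1
        subst hq1'
        rcases Nat.lt_or_ge q2 w with h | h
        · right
          rw [Finset.mem_erase]
          refine ⟨?_, by rw [YoungDiagram.mem_cells, YoungDiagram.mem_iff_lt_rowLen]; exact h⟩
          intro hqc
          apply hc1
          rw [← hqc]
        · left; have : q2 = w := le_antisymm hq2 h; rw [this]
      · exact Or.inr (herase p q hqp hpe)
    · intro hEq
      exact hane (by rw [← hEq]; exact Finset.mem_insert_self _ _)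

lemma one_le_starCap (h2 : 2 ≤ μ.card) : 1 ≤ starCap μ := by
  obtain ⟨c, a, hrem, hA⟩ := exists_transfer h2
  have h1 : 0 < (Amax μ c).ncard := (Set.ncard_pos (amax_finite c)).mpr ⟨a, hA⟩
  exact le_trans h1 (le_starCap hrem)

lemma starCap_attained (h2 : 2 ≤ μ.card) :
    ∃ c : ℕ × ℕ, Removable μ c ∧ (Amax μ c).ncard = starCap μ := by
  obtain ⟨c, a, hrem, hA⟩ := exists_transfer h2
  have hKne : {k | ∃ c : ℕ × ℕ, Removable μ c ∧ (Amax μ c).ncard = k}.Nonempty :=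
    ⟨(Amax μ c).ncard, c, hrem, rfl⟩
  exact Nat.sSup_mem hKne bddAbove_starSet

lemma topCap_attained (μ : YoungDiagram) :
    ∃ a : ℕ × ℕ, Addable μ a ∧ (Cmax μ a).ncard = topCap μ := by
  have hKne : {k | ∃ a : ℕ × ℕ, Addable μ a ∧ (Cmax μ a).ncard = k}.Nonempty :=
    ⟨(Cmax μ (μ.colLen 0, 0)).ncard, (μ.colLen 0, 0), addable_bottomleft μ, rfl⟩
  exact Nat.sSup_mem hKne bddAbove_topSet

end Exists


section Upper
set_option linter.unusedVariables false
variable {n : ℕ}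

lemma clique_card_le (hn : 2 ≤ n) (lam : PartitionVertex n)
    (s : Finset (PartitionVertex n))
    (hclique : (partitionGraph n).IsClique (↑s : Set (PartitionVertex n)))
    (hmem : lam ∈ s) :
    s.card ≤ max (starCap lam.1) (topCap lam.1) + 1 := by
  classical
  have hs1 : 1 ≤ starCap lam.1 := one_le_starCap (by rw [lam.2]; exact hn)
  have hmax1 : 1 ≤ max (starCap lam.1) (topCap lam.1) :=
    le_trans hs1 (le_max_left _ _)
  set t := s.erase lam with ht
  have hcard : s.card = t.card + 1 := by
    rw [ht, Finset.card_erase_of_mem hmem]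
    have : 1 ≤ s.card := Finset.card_pos.mpr ⟨lam, hmem⟩
    omega
  by_cases hsmall : t.card ≤ 1
  · omega
  push_neg at hsmall
  have hadjl : ∀ ν ∈ t, (partitionGraph n).Adj lam ν := by
    intro ν hν
    obtain ⟨hνne, hνs⟩ := Finset.mem_erase.mp hν
    exact hclique (Finset.mem_coe.mpr hmem) (Finset.mem_coe.mpr hνs) (Ne.symm hνne)
  choose! C A hrem hAmem hcells using
    fun ν (hν : ν ∈ t) => neighbor_structure lam ν (hadjl ν hν)
  have key : ∀ ν ∈ t, ∀ ν' ∈ t, ν ≠ ν' → C ν = C ν' ∨ A ν = A ν' := by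
    intro ν hν ν' hν' hnu
    by_contra hcon
    push_neg at hcon
    obtain ⟨hCne, hAne⟩ := hcon
    have hadj : (partitionGraph n).Adj ν ν' :=
      hclique (Finset.mem_coe.mpr (Finset.mem_of_mem_erase hν))
        (Finset.mem_coe.mpr (Finset.mem_of_mem_erase hν')) hnu
    have hAv : A ν ∈ ν.1.cells := by
      rw [hcells ν hν]; exact Finset.mem_insert_self _ _
    have hAvnot : A ν ∉ ν'.1.cells := by
      rw [hcells ν' hν']
      intro hmm
      rcases Finset.mem_insert.mp hmm with heq | hmm2
      · exact hAne heq
      · exact (hAmem ν hν).1.1 (Finset.mem_of_mem_erase hmm2)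
    have hCl : C ν' ∈ lam.1.cells := (hrem ν' hν').1
    have hCv : C ν' ∈ ν.1.cells := by
      rw [hcells ν hν]
      exact Finset.mem_insert.mpr (Or.inr (Finset.mem_erase.mpr ⟨Ne.symm hCne, hCl⟩))
    have hCnot : C ν' ∉ ν'.1.cells := by
      rw [hcells ν' hν']
      intro hmm
      rcases Finset.mem_insert.mp hmm with heq | hmm2
      · exact (hAmem ν' hν').1.1 (heq ▸ hCl)
      · exact (Finset.mem_erase.mp hmm2).1 rfl
    have hACne : A ν ≠ C ν' := fun h => (hAmem ν hν).1.1 (h ▸ hCl)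
    have hsub : ({A ν, C ν'} : Finset (ℕ × ℕ)) ⊆ ν.1.cells \ ν'.1.cells := by
      intro x hx
      rcases Finset.mem_insert.mp hx with rfl | hx
      · exact Finset.mem_sdiff.mpr ⟨hAv, hAvnot⟩
      · rw [Finset.mem_singleton] at hx
        subst hx
        exact Finset.mem_sdiff.mpr ⟨hCv, hCnot⟩
    have h2le : 2 ≤ (ν.1.cells \ ν'.1.cells).card := by
      calc 2 = ({A ν, C ν'} : Finset (ℕ × ℕ)).card := (Finset.card_pair hACne).symm
        _ ≤ _ := Finset.card_le_card hsub
    have := hadj.2.1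
    omega
  obtain ⟨ν1, hν1, ν2, hν2, h12⟩ := Finset.one_lt_card.mp hsmall
  rcases key ν1 hν1 ν2 hν2 h12 with hC | hA
  · -- all transfers share the removable corner C ν1
    have hall : ∀ ν ∈ t, C ν = C ν1 := by
      intro ν hν
      by_cases h1 : ν = ν1
      · rw [h1]
      by_cases h2 : ν = ν2
      · rw [h2, ← hC]
      rcases key ν hν ν1 hν1 h1 with h | hA1
      · exact h
      rcases key ν hν ν2 hν2 h2 with h | hA2
      · rw [h, ← hC]
      · exfalso
        apply h12
        apply vertex_eq_of_cells_eq
        rw [hcells ν1 hν1, hcells ν2 hν2, ← hC, ← hA1, ← hA2]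
    have hfin := amax_finite (μ := lam.1) (C ν1)
    have hmaps : ∀ ν ∈ t, A ν ∈ hfin.toFinset := by
      intro ν hν
      rw [Set.Finite.mem_toFinset]
      have hAm := hAmem ν hν
      rw [hall ν hν] at hAm
      exact hAm
    have hinjA : Set.InjOn A (↑t : Set (PartitionVertex n)) := by
      intro ν hν ν' hν' hAA
      apply vertex_eq_of_cells_eq
      rw [hcells ν (Finset.mem_coe.mp hν), hcells ν' (Finset.mem_coe.mp hν'),
        hall ν (Finset.mem_coe.mp hν), hall ν' (Finset.mem_coe.mp hν'), hAA]
    have hle : t.card ≤ hfin.toFinset.card :=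
      Finset.card_le_card_of_injOn A hmaps hinjA
    have hncard : hfin.toFinset.card = (Amax lam.1 (C ν1)).ncard :=
      (Set.ncard_eq_toFinset_card _ hfin).symm
    have hts : t.card ≤ starCap lam.1 := by
      rw [hcard] at *
      calc t.card ≤ (Amax lam.1 (C ν1)).ncard := by rw [← hncard]; exact hle
        _ ≤ starCap lam.1 := le_starCap (hrem ν1 hν1)
    have := le_max_left (starCap lam.1) (topCap lam.1)
    omega
  · -- all transfers share the addable corner A ν1
    have hall : ∀ ν ∈ t, A ν = A ν1 := by
      intro ν hν
      by_cases h1 : ν = ν1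
      · rw [h1]
      by_cases h2 : ν = ν2
      · rw [h2, ← hA]
      rcases key ν hν ν1 hν1 h1 with hC1 | h
      · rcases key ν hν ν2 hν2 h2 with hC2 | h
        · exfalso
          apply h12
          apply vertex_eq_of_cells_eq
          rw [hcells ν1 hν1, hcells ν2 hν2, ← hA, ← hC1, ← hC2]
        · rw [h, ← hA]
      · exact h
    have hfin := cmax_finite (μ := lam.1) (A ν1)
    have hmaps : ∀ ν ∈ t, C ν ∈ hfin.toFinset := by
      intro ν hν
      rw [Set.Finite.mem_toFinset]
      refine ⟨hrem ν hν, ?_⟩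
      have hAm := (hAmem ν hν).2
      rw [hall ν hν] at hAm
      exact hAm
    have hinjC : Set.InjOn C (↑t : Set (PartitionVertex n)) := by
      intro ν hν ν' hν' hCC
      apply vertex_eq_of_cells_eq
      rw [hcells ν (Finset.mem_coe.mp hν), hcells ν' (Finset.mem_coe.mp hν'),
        hall ν (Finset.mem_coe.mp hν), hall ν' (Finset.mem_coe.mp hν'), hCC]
    have hle : t.card ≤ hfin.toFinset.card :=
      Finset.card_le_card_of_injOn C hmaps hinjC
    have hncard : hfin.toFinset.card = (Cmax lam.1 (A ν1)).ncard :=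
      (Set.ncard_eq_toFinset_card _ hfin).symm
    have htt : t.card ≤ topCap lam.1 := by
      calc t.card ≤ (Cmax lam.1 (A ν1)).ncard := by rw [← hncard]; exact hle
        _ ≤ topCap lam.1 := le_topCap (hAmem ν1 hν1).1
    have := le_max_right (starCap lam.1) (topCap lam.1)
    omega

end Upper

/-- For every `n ≥ 2` and every `λ ⊢ n`,
`dim_loc(λ) = max(1, s(λ), t(λ))`; in particular, for every `r ≥ 2`,
`dim_loc(λ) ≥ r` iff `s(λ) ≥ r` or `t(λ) ≥ r`. -/
theorem dimLoc_eq_max_capacities (n : ℕ) (hn : 2 ≤ n) (lam : PartitionVertex n) :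
    dimLoc n lam = max 1 (max (starCap lam.1) (topCap lam.1)) ∧
    ∀ r : ℕ, 2 ≤ r → (r ≤ dimLoc n lam ↔ r ≤ starCap lam.1 ∨ r ≤ topCap lam.1) := by
  have hcard2 : 2 ≤ lam.1.card := by rw [lam.2]; exact hn
  have hs1 : 1 ≤ starCap lam.1 := one_le_starCap hcard2
  set M := max (starCap lam.1) (topCap lam.1) with hM
  have hMD : ∃ s : Finset (PartitionVertex n),
      (partitionGraph n).IsClique (↑s : Set (PartitionVertex n)) ∧ s.card = M + 1 ∧ lam ∈ s := by
    rcases le_total (topCap lam.1) (starCap lam.1) with h | h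
    · obtain ⟨c, hremc, hccard⟩ := starCap_attained hcard2
      obtain ⟨s, h1, h2, h3⟩ := star_clique lam hremc
      exact ⟨s, h1, by rw [h2, hccard, hM, max_eq_left h], h3⟩
    · obtain ⟨a, hadda, hacard⟩ := topCap_attained lam.1
      obtain ⟨s, h1, h2, h3⟩ := top_clique lam hadda
      exact ⟨s, h1, by rw [h2, hacard, hM, max_eq_right h], h3⟩
  have hbdd : M ∈ upperBounds {d : ℕ | ∃ s : Finset (PartitionVertex n),
      (partitionGraph n).IsClique (↑s : Set (PartitionVertex n)) ∧ s.card = d + 1 ∧ lam ∈ s} := by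
    rintro d ⟨s, h1, h2, h3⟩
    have hc := clique_card_le hn lam s h1 h3
    omega
  have hdim : dimLoc n lam = M := by
    apply le_antisymm
    · exact csSup_le ⟨M, hMD⟩ hbdd
    · exact le_csSup ⟨M, hbdd⟩ hMD
  constructor
  · rw [hdim, hM]
    exact (max_eq_right (le_trans hs1 (le_max_left _ _))).symm
  · intro r hr
    rw [hdim, hM]
    exact le_max_iff
end

section
/- For every n ≥ 2 and every r ≥ 2, L_{≥r}(n) = {λ ⊢ n : s(λ) ≥ r or t(λ) ≥ r}; moreover, for every r ≥ 1, L_r(n) = {λ ⊢ n : max(1, s(λ), t(λ)) = r}. -/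
namespace LCAux

open Finset

lemma natSSup_le {S : Set ℕ} {n : ℕ} (h : ∀ a ∈ S, a ≤ n) : sSup S ≤ n := by
  classical
  rw [Nat.sSup_def ⟨n, h⟩]
  exact Nat.find_min' _ h

variable {μ : YoungDiagram} {c c' a a' : ℕ × ℕ}

lemma mem_transferCells {x : ℕ × ℕ} :
    x ∈ transferCells μ c a ↔ x = a ∨ (x ≠ c ∧ x ∈ μ.cells) := by
  simp [transferCells, Finset.mem_insert, Finset.mem_erase]

lemma diff_transfer (hc : c ∈ μ.cells) (ha : a ∉ μ.cells) :
    μ.cells \ transferCells μ c a = {c} := by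
  ext x
  simp only [Finset.mem_sdiff, mem_transferCells, Finset.mem_singleton]
  constructor
  · rintro ⟨hx, hx2⟩
    by_contra hxc
    exact hx2 (Or.inr ⟨hxc, hx⟩)
  · rintro rfl
    refine ⟨hc, ?_⟩
    rintro (rfl | ⟨h1, _⟩)
    · exact ha hc
    · exact h1 rfl

lemma transfer_diff (hc : c ∈ μ.cells) (ha : a ∉ μ.cells) :
    transferCells μ c a \ μ.cells = {a} := by
  ext x
  simp only [Finset.mem_sdiff, mem_transferCells, Finset.mem_singleton]
  constructor
  · rintro ⟨(rfl | ⟨_, hx⟩), hx2⟩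
    · rfl
    · exact absurd hx hx2
  · rintro rfl
    exact ⟨Or.inl rfl, ha⟩

lemma transfer_card (hc : c ∈ μ.cells) (ha : a ∉ μ.cells) :
    (transferCells μ c a).card = μ.card := by
  have hae : a ∉ μ.cells.erase c := fun h => ha (Finset.mem_of_mem_erase h)
  have h1 : 1 ≤ μ.cells.card := Finset.card_pos.mpr ⟨c, hc⟩
  rw [transferCells, Finset.card_insert_of_notMem hae, Finset.card_erase_of_mem hc]
  show μ.cells.card - 1 + 1 = μ.cells.card
  omega

lemma transfer_diff_same_c (ha : a ∉ μ.cells) (ha' : a' ∉ μ.cells) (hne : a ≠ a') :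
    transferCells μ c a \ transferCells μ c a' = {a} := by
  ext x
  simp only [Finset.mem_sdiff, mem_transferCells, Finset.mem_singleton]
  constructor
  · rintro ⟨(rfl | ⟨hxc, hx⟩), hx2⟩
    · rfl
    · exact absurd (Or.inr ⟨hxc, hx⟩) hx2
  · rintro rfl
    refine ⟨Or.inl rfl, ?_⟩
    rintro (rfl | ⟨_, hx⟩)
    · exact hne rfl
    · exact ha hx

lemma transfer_diff_same_a (hc : c ∈ μ.cells) (hc' : c' ∈ μ.cells) (ha : a ∉ μ.cells)
    (hne : c ≠ c') :
    transferCells μ c a \ transferCells μ c' a = {c'} := by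
  ext x
  simp only [Finset.mem_sdiff, mem_transferCells, Finset.mem_singleton]
  constructor
  · rintro ⟨(rfl | ⟨hxc, hx⟩), hx2⟩
    · exact absurd (Or.inl rfl) hx2
    · by_contra hxc'
      exact hx2 (Or.inr ⟨hxc', hx⟩)
  · rintro rfl
    refine ⟨Or.inr ⟨fun h => hne h.symm, hc'⟩, ?_⟩
    rintro (rfl | ⟨h1, _⟩)
    · exact ha hc'
    · exact h1 rfl

lemma transfer_inj_a (ha : a ∉ μ.cells) (ha' : a' ∉ μ.cells)
    (h : transferCells μ c a = transferCells μ c a') : a = a' := by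
  by_contra hne
  have h2 := transfer_diff_same_c (c := c) ha ha' hne
  rw [h, Finset.sdiff_self] at h2
  simpa using h2.symm

lemma transfer_inj_c (hc : c ∈ μ.cells) (hc' : c' ∈ μ.cells) (ha : a ∉ μ.cells)
    (h : transferCells μ c a = transferCells μ c' a) : c = c' := by
  by_contra hne
  have h2 := transfer_diff_same_a hc hc' ha hne
  rw [h, Finset.sdiff_self] at h2
  simpa using h2.symm

lemma share_of_card (hc : c ∈ μ.cells) (hc' : c' ∈ μ.cells) (ha : a ∉ μ.cells)
    (ha' : a' ∉ μ.cells)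
    (h : (transferCells μ c a \ transferCells μ c' a').card = 1) : c = c' ∨ a = a' := by
  by_contra hcon
  push_neg at hcon
  obtain ⟨hcc, haa⟩ := hcon
  have h1 : c' ∈ transferCells μ c a \ transferCells μ c' a' := by
    simp only [Finset.mem_sdiff, mem_transferCells]
    refine ⟨Or.inr ⟨fun h => hcc h.symm, hc'⟩, ?_⟩
    rintro (rfl | ⟨h1, _⟩)
    · exact ha' hc'
    · exact h1 rfl
  have h2 : a ∈ transferCells μ c a \ transferCells μ c' a' := by
    refine Finset.mem_sdiff.mpr ⟨mem_transferCells.mpr (Or.inl rfl), ?_⟩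
    rw [mem_transferCells]
    rintro (rfl | ⟨_, hx⟩)
    · exact haa rfl
    · exact ha hx
  have hne : c' ≠ a := fun h => ha (h ▸ hc')
  have hsub : ({c', a} : Finset (ℕ × ℕ)) ⊆ transferCells μ c a \ transferCells μ c' a' := by
    intro x hx
    rcases Finset.mem_insert.mp hx with rfl | hx
    · exact h1
    · rw [Finset.mem_singleton] at hx; subst hx; exact h2
  have := Finset.card_le_card hsub
  rw [Finset.card_pair hne, h] at this
  omega

end LCAux
namespace LCAux

variable {μ : YoungDiagram} {c c' a a' : ℕ × ℕ}

lemma adj_decomp {n : ℕ} {lam nu : PartitionVertex n}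
    (h : (partitionGraph n).Adj lam nu) :
    ∃ c a, Removable lam.1 c ∧ a ∈ Amax lam.1 c ∧
      nu.1.cells = transferCells lam.1 c a := by
  obtain ⟨hne, h1, h2⟩ := h
  obtain ⟨c, hc⟩ := Finset.card_eq_one.mp h1
  obtain ⟨a, ha⟩ := Finset.card_eq_one.mp h2
  have hcl : c ∈ lam.1.cells := (Finset.mem_sdiff.mp (hc ▸ Finset.mem_singleton_self c)).1
  have hcn : c ∉ nu.1.cells := (Finset.mem_sdiff.mp (hc ▸ Finset.mem_singleton_self c)).2
  have han : a ∈ nu.1.cells := (Finset.mem_sdiff.mp (ha ▸ Finset.mem_singleton_self a)).1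
  have hal : a ∉ lam.1.cells := (Finset.mem_sdiff.mp (ha ▸ Finset.mem_singleton_self a)).2
  have hcells : nu.1.cells = transferCells lam.1 c a := by
    ext x
    rw [mem_transferCells]
    constructor
    · intro hx
      by_cases hxl : x ∈ lam.1.cells
      · refine Or.inr ⟨?_, hxl⟩
        rintro rfl
        exact hcn hx
      · have hmem : x ∈ nu.1.cells \ lam.1.cells := Finset.mem_sdiff.mpr ⟨hx, hxl⟩
        rw [ha, Finset.mem_singleton] at hmem
        exact Or.inl hmem
    · rintro (rfl | ⟨hxc, hxl⟩)
      · exact han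
      · by_contra hxn
        have hmem : x ∈ lam.1.cells \ nu.1.cells := Finset.mem_sdiff.mpr ⟨hxl, hxn⟩
        rw [hc, Finset.mem_singleton] at hmem
        exact hxc hmem
  have hnulow : IsLowerSet (↑(transferCells lam.1 c a) : Set (ℕ × ℕ)) := by
    rw [← hcells]; exact nu.1.isLowerSet
  refine ⟨c, a, ⟨hcl, ?_⟩, ⟨⟨hal, ?_⟩, hnulow, ?_⟩, hcells⟩
  · -- erase is a lower set
    intro y x hxy hy
    simp only [Finset.coe_erase, Set.mem_diff, Set.mem_singleton_iff, Finset.mem_coe] at hy ⊢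
    refine ⟨lam.1.isLowerSet hxy hy.1, ?_⟩
    rintro rfl
    have hyn : y ∈ nu.1.cells := by
      rw [hcells, mem_transferCells]
      exact Or.inr ⟨hy.2, hy.1⟩
    exact hcn (Finset.mem_coe.mp (nu.1.isLowerSet hxy (Finset.mem_coe.mpr hyn)))
  · -- insert is a lower set
    intro y x hxy hy
    simp only [Finset.coe_insert, Set.mem_insert_iff, Finset.mem_coe] at hy ⊢
    rcases hy with rfl | hy
    · have hxn : x ∈ nu.1.cells := Finset.mem_coe.mp (nu.1.isLowerSet hxy (Finset.mem_coe.mpr han))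
      rw [hcells, mem_transferCells] at hxn
      rcases hxn with rfl | ⟨_, hx⟩
      · exact Or.inl rfl
      · exact Or.inr hx
    · exact Or.inr (Finset.mem_coe.mp (lam.1.isLowerSet hxy (Finset.mem_coe.mpr hy)))
  · -- transfer differs from lam
    intro hEq
    exact hne (Subtype.ext (YoungDiagram.ext (hcells.trans hEq)).symm)

def addBound (μ : YoungDiagram) : Finset (ℕ × ℕ) :=
  insert (0, 0)
    (μ.cells.image (fun x => (x.1 + 1, x.2)) ∪ μ.cells.image (fun x => (x.1, x.2 + 1)))

lemma addable_mem_addBound (h : Addable μ a) : a ∈ addBound μ := by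
  obtain ⟨hna, hl⟩ := h
  obtain ⟨i, j⟩ := a
  have key : ∀ x : ℕ × ℕ, x ≤ (i, j) → x ≠ (i, j) → x ∈ μ.cells := by
    intro x hle hne
    have hx : x ∈ (↑(insert (i, j) μ.cells) : Set (ℕ × ℕ)) := hl hle (by simp)
    simp only [Finset.coe_insert, Set.mem_insert_iff, Finset.mem_coe] at hx
    tauto
  rcases Nat.eq_zero_or_pos i with hi | hi
  · rcases Nat.eq_zero_or_pos j with hj | hj
    · subst hi; subst hj
      exact Finset.mem_insert_self _ _
    · have hm : (i, j - 1) ∈ μ.cells :=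
        key _ (Prod.mk_le_mk.mpr ⟨le_rfl, Nat.sub_le _ _⟩) (by simp [Prod.ext_iff]; omega)
      refine Finset.mem_insert_of_mem (Finset.mem_union_right _ ?_)
      refine Finset.mem_image.mpr ⟨(i, j - 1), hm, ?_⟩
      simp [Prod.ext_iff]; omega
  · have hm : (i - 1, j) ∈ μ.cells :=
      key _ (Prod.mk_le_mk.mpr ⟨Nat.sub_le _ _, le_rfl⟩) (by simp [Prod.ext_iff]; omega)
    refine Finset.mem_insert_of_mem (Finset.mem_union_left _ ?_)
    refine Finset.mem_image.mpr ⟨(i - 1, j), hm, ?_⟩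
    simp [Prod.ext_iff]; omega

lemma amax_finite (μ : YoungDiagram) (c : ℕ × ℕ) : (Amax μ c).Finite :=
  Set.Finite.subset (addBound μ).finite_toSet (fun _ ha => addable_mem_addBound ha.1)

lemma amax_ncard_le (μ : YoungDiagram) (c : ℕ × ℕ) :
    (Amax μ c).ncard ≤ (addBound μ).card := by
  have h := Set.ncard_le_ncard
      (show Amax μ c ⊆ ↑(addBound μ) from fun x hx => addable_mem_addBound hx.1)
      (addBound μ).finite_toSet
  rwa [Set.ncard_coe_finset] at h

lemma cmax_finite (μ : YoungDiagram) (a : ℕ × ℕ) : (Cmax μ a).Finite :=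
  Set.Finite.subset μ.cells.finite_toSet (fun _ hc => hc.1.1)

lemma cmax_ncard_le (μ : YoungDiagram) (a : ℕ × ℕ) :
    (Cmax μ a).ncard ≤ μ.cells.card := by
  have h := Set.ncard_le_ncard
      (show Cmax μ a ⊆ ↑μ.cells from fun x hx => hx.1.1) μ.cells.finite_toSet
  rwa [Set.ncard_coe_finset] at h

lemma starCap_bdd (μ : YoungDiagram) :
    BddAbove {k | ∃ c : ℕ × ℕ, Removable μ c ∧ (Amax μ c).ncard = k} :=
  ⟨(addBound μ).card, fun _ ⟨c, _, hk⟩ => hk ▸ amax_ncard_le μ c⟩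

lemma topCap_bdd (μ : YoungDiagram) :
    BddAbove {k | ∃ a : ℕ × ℕ, Addable μ a ∧ (Cmax μ a).ncard = k} :=
  ⟨μ.cells.card, fun _ ⟨a, _, hk⟩ => hk ▸ cmax_ncard_le μ a⟩

lemma le_starCap (hc : Removable μ c) : (Amax μ c).ncard ≤ starCap μ :=
  le_csSup (starCap_bdd μ) ⟨c, hc, rfl⟩

lemma le_topCap (ha : Addable μ a) : (Cmax μ a).ncard ≤ topCap μ :=
  le_csSup (topCap_bdd μ) ⟨a, ha, rfl⟩

open scoped Classical in
noncomputable def tvert (n : ℕ) (lam : PartitionVertex n) (c a : ℕ × ℕ) :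
    PartitionVertex n :=
  if h : c ∈ lam.1.cells ∧ a ∉ lam.1.cells ∧
      IsLowerSet (↑(transferCells lam.1 c a) : Set (ℕ × ℕ)) then
    ⟨⟨transferCells lam.1 c a, h.2.2⟩, by
      show (transferCells lam.1 c a).card = n
      rw [transfer_card h.1 h.2.1]
      exact lam.2⟩
  else lam

lemma tvert_cells {n : ℕ} (lam : PartitionVertex n) {c a : ℕ × ℕ}
    (h1 : c ∈ lam.1.cells) (h2 : a ∉ lam.1.cells)
    (h3 : IsLowerSet (↑(transferCells lam.1 c a) : Set (ℕ × ℕ))) :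
    (tvert n lam c a).1.cells = transferCells lam.1 c a := by
  rw [tvert, dif_pos ⟨h1, h2, h3⟩]

end LCAux
namespace LCAux

variable {μ : YoungDiagram}

lemma vertex_eq_of_cells {n : ℕ} {x y : PartitionVertex n}
    (h : x.1.cells = y.1.cells) : x = y :=
  Subtype.ext (YoungDiagram.ext h)

lemma clique_bound {n : ℕ} {lam : PartitionVertex n} {d : ℕ}
    {s : Finset (PartitionVertex n)}
    (hcl : (partitionGraph n).IsClique (↑s : Set (PartitionVertex n)))
    (hcard : s.card = d + 1) (hmem : lam ∈ s) :
    d ≤ max 1 (max (starCap lam.1) (topCap lam.1)) := by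
  classical
  by_cases hd : d ≤ 1
  · exact le_trans hd (le_max_left _ _)
  push_neg at hd
  set T := s.erase lam with hT
  have hTcard : T.card = d := by
    rw [hT, Finset.card_erase_of_mem hmem, hcard]
    omega
  have hadj : ∀ ν ∈ T, (partitionGraph n).Adj lam ν := by
    intro ν hν
    exact hcl (Finset.mem_coe.mpr hmem) (Finset.mem_coe.mpr (Finset.mem_of_mem_erase hν))
      (fun h => (Finset.mem_erase.mp hν).1 h.symm)
  have hadjT : ∀ ν ∈ T, ∀ ν' ∈ T, ν ≠ ν' → (partitionGraph n).Adj ν ν' := by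
    intro ν hν ν' hν' hne
    exact hcl (Finset.mem_coe.mpr (Finset.mem_of_mem_erase hν))
      (Finset.mem_coe.mpr (Finset.mem_of_mem_erase hν')) hne
  obtain ⟨ν1, hν1, ν2, hν2, hνne⟩ := Finset.one_lt_card.mp (hTcard ▸ hd)
  obtain ⟨c1, a1, hr1, ha1, he1⟩ := adj_decomp (hadj ν1 hν1)
  obtain ⟨c2, a2, hr2, ha2, he2⟩ := adj_decomp (hadj ν2 hν2)
  -- sharing lemma applied to two adjacent transfer vertices
  have hshare : ∀ ν ∈ T, ∀ ν' ∈ T, ν ≠ ν' →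
      ∀ {c a c' a' : ℕ × ℕ}, Removable lam.1 c → a ∈ Amax lam.1 c →
        ν.1.cells = transferCells lam.1 c a →
        Removable lam.1 c' → a' ∈ Amax lam.1 c' →
        ν'.1.cells = transferCells lam.1 c' a' → c = c' ∨ a = a' := by
    intro ν hν ν' hν' hne c a c' a' hrc hac hec hrc' hac' hec'
    obtain ⟨_, hd1, _⟩ := hadjT ν hν ν' hν' hne
    rw [hec, hec'] at hd1
    exact share_of_card hrc.1 hrc'.1 hac.1.1 hac'.1.1 hd1
  rcases hshare ν1 hν1 ν2 hν2 hνne hr1 ha1 he1 hr2 ha2 he2 with hcc | haa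
  · -- star case : all vertices of T are transfers from the corner c1
    subst hcc
    have ha12 : a1 ≠ a2 := by
      intro h
      subst h
      exact hνne (vertex_eq_of_cells (he1.trans he2.symm))
    have hall : ∀ ν ∈ T, ∃ x, x ∈ Amax lam.1 c1 ∧
        ν.1.cells = transferCells lam.1 c1 x := by
      intro ν hν
      obtain ⟨c3, a3, hr3, ha3, he3⟩ := adj_decomp (hadj ν hν)
      by_cases h31 : ν = ν1
      · subst h31
        have hc31 : c3 = c1 := by
          have e1 : lam.1.cells \ ν.1.cells = {c3} := by
            rw [he3]; exact diff_transfer hr3.1 ha3.1.1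
          have e2 : lam.1.cells \ ν.1.cells = {c1} := by
            rw [he1]; exact diff_transfer hr1.1 ha1.1.1
          exact Finset.singleton_injective (e1.symm.trans e2)
        subst hc31
        exact ⟨a3, ha3, he3⟩
      · rcases hshare ν hν ν1 hν1 h31 hr3 ha3 he3 hr1 ha1 he1 with h | h
        · subst h; exact ⟨a3, ha3, he3⟩
        · subst h
          by_cases h32 : ν = ν2
          · subst h32
            have hc31 : c3 = c1 := by
              have e1 : lam.1.cells \ ν.1.cells = {c3} := by
                rw [he3]; exact diff_transfer hr3.1 ha3.1.1
              have e2 : lam.1.cells \ ν.1.cells = {c1} := by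
                rw [he2]; exact diff_transfer hr2.1 ha2.1.1
              exact Finset.singleton_injective (e1.symm.trans e2)
            subst hc31
            exact ⟨a3, ha3, he3⟩
          · rcases hshare ν hν ν2 hν2 h32 hr3 ha3 he3 hr2 ha2 he2 with h | h
            · subst h; exact ⟨a3, ha3, he3⟩
            · exact absurd h ha12
    -- inject T into Amax lam.1 c1
    choose f hf1 hf2 using hall
    have hinj : T.card ≤ (amax_finite lam.1 c1).toFinset.card := by
      apply Finset.card_le_card_of_injOn (fun ν => if h : ν ∈ T then f ν h else (0, 0))
      · intro ν hν
        simp only [Finset.mem_coe] at hν ⊢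
        rw [dif_pos hν, Set.Finite.mem_toFinset]
        exact hf1 ν hν
      · intro ν hν ν' hν' hEq
        rw [Finset.mem_coe] at hν hν'
        simp only at hEq
        rw [dif_pos hν, dif_pos hν'] at hEq
        apply vertex_eq_of_cells
        rw [hf2 ν hν, hf2 ν' hν', hEq]
    rw [hTcard, ← Set.ncard_eq_toFinset_card (Amax lam.1 c1) (amax_finite lam.1 c1)] at hinj
    exact le_trans hinj (le_trans (le_starCap hr1)
      (le_trans (le_max_left _ _) (le_max_right _ _)))
  · -- top case : all vertices of T are transfers into the cell a1
    subst haa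
    have hc12 : c1 ≠ c2 := by
      intro h
      subst h
      exact hνne (vertex_eq_of_cells (he1.trans he2.symm))
    have hall : ∀ ν ∈ T, ∃ x, x ∈ Cmax lam.1 a1 ∧
        ν.1.cells = transferCells lam.1 x a1 := by
      intro ν hν
      obtain ⟨c3, a3, hr3, ha3, he3⟩ := adj_decomp (hadj ν hν)
      by_cases h31 : ν = ν1
      · subst h31
        have ha31 : a3 = a1 := by
          have e1 : ν.1.cells \ lam.1.cells = {a3} := by
            rw [he3]; exact transfer_diff hr3.1 ha3.1.1
          have e2 : ν.1.cells \ lam.1.cells = {a1} := by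
            rw [he1]; exact transfer_diff hr1.1 ha1.1.1
          exact Finset.singleton_injective (e1.symm.trans e2)
        subst ha31
        exact ⟨c3, ⟨hr3, ha3.2⟩, he3⟩
      · rcases hshare ν hν ν1 hν1 h31 hr3 ha3 he3 hr1 ha1 he1 with h | h
        · subst h
          by_cases h32 : ν = ν2
          · subst h32
            have ha31 : a3 = a1 := by
              have e1 : ν.1.cells \ lam.1.cells = {a3} := by
                rw [he3]; exact transfer_diff hr3.1 ha3.1.1
              have e2 : ν.1.cells \ lam.1.cells = {a1} := by
                rw [he2]; exact transfer_diff hr2.1 ha2.1.1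
              exact Finset.singleton_injective (e1.symm.trans e2)
            subst ha31
            exact ⟨c3, ⟨hr3, ha3.2⟩, he3⟩
          · rcases hshare ν hν ν2 hν2 h32 hr3 ha3 he3 hr2 ha2 he2 with h | h
            · exact absurd h hc12
            · subst h
              exact ⟨c3, ⟨hr3, ha3.2⟩, he3⟩
        · subst h
          exact ⟨c3, ⟨hr3, ha3.2⟩, he3⟩
    choose f hf1 hf2 using hall
    have hinj : T.card ≤ (cmax_finite lam.1 a1).toFinset.card := by
      apply Finset.card_le_card_of_injOn (fun ν => if h : ν ∈ T then f ν h else (0, 0))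
      · intro ν hν
        simp only [Finset.mem_coe] at hν ⊢
        rw [dif_pos hν, Set.Finite.mem_toFinset]
        exact hf1 ν hν
      · intro ν hν ν' hν' hEq
        rw [Finset.mem_coe] at hν hν'
        simp only at hEq
        rw [dif_pos hν, dif_pos hν'] at hEq
        apply vertex_eq_of_cells
        rw [hf2 ν hν, hf2 ν' hν', hEq]
    rw [hTcard, ← Set.ncard_eq_toFinset_card (Cmax lam.1 a1) (cmax_finite lam.1 a1)] at hinj
    exact le_trans hinj (le_trans (le_topCap ha1.1)
      (le_trans (le_max_right _ _) (le_max_right _ _)))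

end LCAux
namespace LCAux

lemma dimLoc_bdd (n : ℕ) (lam : PartitionVertex n) :
    BddAbove {d : ℕ | ∃ s : Finset (PartitionVertex n),
      (partitionGraph n).IsClique (↑s : Set (PartitionVertex n)) ∧ s.card = d + 1 ∧ lam ∈ s} :=
  ⟨max 1 (max (starCap lam.1) (topCap lam.1)),
    fun _ ⟨s, h1, h2, h3⟩ => clique_bound h1 h2 h3⟩

lemma dimLoc_le (n : ℕ) (lam : PartitionVertex n) :
    dimLoc n lam ≤ max 1 (max (starCap lam.1) (topCap lam.1)) :=
  natSSup_le (fun _ ⟨s, h1, h2, h3⟩ => clique_bound h1 h2 h3)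

lemma starCap_le_dimLoc (n : ℕ) (lam : PartitionVertex n) :
    starCap lam.1 ≤ dimLoc n lam := by
  classical
  apply natSSup_le
  rintro k ⟨c, hc, rfl⟩
  set A := (amax_finite lam.1 c).toFinset with hA
  have hAmem : ∀ a, a ∈ A ↔ a ∈ Amax lam.1 c := fun a => Set.Finite.mem_toFinset _
  have hcells : ∀ a ∈ A, (tvert n lam c a).1.cells = transferCells lam.1 c a := by
    intro a ha
    rw [hAmem] at ha
    exact tvert_cells lam hc.1 ha.1.1 ha.2.1
  have hadjl : ∀ a ∈ A, (partitionGraph n).Adj lam (tvert n lam c a) := by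
    intro a ha
    have hcl := hcells a ha
    rw [hAmem] at ha
    refine ⟨?_, ?_, ?_⟩
    · intro h
      apply ha.2.2
      rw [← hcl, ← h]
    · rw [hcl, diff_transfer hc.1 ha.1.1, Finset.card_singleton]
    · rw [hcl, transfer_diff hc.1 ha.1.1, Finset.card_singleton]
  have hadjt : ∀ a ∈ A, ∀ a' ∈ A, a ≠ a' →
      (partitionGraph n).Adj (tvert n lam c a) (tvert n lam c a') := by
    intro a ha a' ha' hne
    have h1 := hcells a ha
    have h2 := hcells a' ha'
    rw [hAmem] at ha ha'
    refine ⟨?_, ?_, ?_⟩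
    · intro h
      exact hne (transfer_inj_a ha.1.1 ha'.1.1 (by rw [← h1, ← h2, h]))
    · rw [h1, h2, transfer_diff_same_c ha.1.1 ha'.1.1 hne, Finset.card_singleton]
    · rw [h2, h1, transfer_diff_same_c ha'.1.1 ha.1.1 hne.symm, Finset.card_singleton]
  set S : Finset (PartitionVertex n) := insert lam (A.image (tvert n lam c)) with hS
  have hclique : (partitionGraph n).IsClique (↑S : Set (PartitionVertex n)) := by
    intro x hx y hy hxy
    rw [Finset.mem_coe, hS, Finset.mem_insert] at hx hy
    rcases hx with rfl | hx
    · rcases hy with rfl | hy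
      · exact absurd rfl hxy
      · obtain ⟨a, ha, rfl⟩ := Finset.mem_image.mp hy
        exact hadjl a ha
    · obtain ⟨a, ha, rfl⟩ := Finset.mem_image.mp hx
      rcases hy with rfl | hy
      · exact (hadjl a ha).symm
      · obtain ⟨a', ha', rfl⟩ := Finset.mem_image.mp hy
        have hne : a ≠ a' := by
          rintro rfl
          exact hxy rfl
        exact hadjt a ha a' ha' hne
  have hinjA : Set.InjOn (tvert n lam c) ↑A := by
    intro a ha a' ha' h
    rw [Finset.mem_coe] at ha ha'
    have h1 := hcells a ha
    have h2 := hcells a' ha'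
    rw [hAmem] at ha ha'
    exact transfer_inj_a ha.1.1 ha'.1.1 (by rw [← h1, ← h2, h])
  have hlamnot : lam ∉ A.image (tvert n lam c) := by
    intro h
    obtain ⟨a, ha, hEq⟩ := Finset.mem_image.mp h
    have h1 := hcells a ha
    rw [hAmem] at ha
    apply ha.2.2
    rw [← h1, hEq]
  have hcard : S.card = (Amax lam.1 c).ncard + 1 := by
    rw [hS, Finset.card_insert_of_notMem hlamnot, Finset.card_image_of_injOn hinjA,
      hA, ← Set.ncard_eq_toFinset_card (Amax lam.1 c) (amax_finite lam.1 c)]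
  exact le_csSup (dimLoc_bdd n lam) ⟨S, hclique, hcard, Finset.mem_insert_self _ _⟩

lemma topCap_le_dimLoc (n : ℕ) (lam : PartitionVertex n) :
    topCap lam.1 ≤ dimLoc n lam := by
  classical
  apply natSSup_le
  rintro k ⟨a, ha, rfl⟩
  set A := (cmax_finite lam.1 a).toFinset with hA
  have hAmem : ∀ c, c ∈ A ↔ c ∈ Cmax lam.1 a := fun c => Set.Finite.mem_toFinset _
  have hcells : ∀ c ∈ A, (tvert n lam c a).1.cells = transferCells lam.1 c a := by
    intro c hc
    rw [hAmem] at hc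
    exact tvert_cells lam hc.1.1 ha.1 hc.2.1
  have hadjl : ∀ c ∈ A, (partitionGraph n).Adj lam (tvert n lam c a) := by
    intro c hc
    have hcl := hcells c hc
    rw [hAmem] at hc
    refine ⟨?_, ?_, ?_⟩
    · intro h
      apply hc.2.2
      rw [← hcl, ← h]
    · rw [hcl, diff_transfer hc.1.1 ha.1, Finset.card_singleton]
    · rw [hcl, transfer_diff hc.1.1 ha.1, Finset.card_singleton]
  have hadjt : ∀ c ∈ A, ∀ c' ∈ A, c ≠ c' →
      (partitionGraph n).Adj (tvert n lam c a) (tvert n lam c' a) := by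
    intro c hc c' hc' hne
    have h1 := hcells c hc
    have h2 := hcells c' hc'
    rw [hAmem] at hc hc'
    refine ⟨?_, ?_, ?_⟩
    · intro h
      exact hne (transfer_inj_c hc.1.1 hc'.1.1 ha.1 (by rw [← h1, ← h2, h]))
    · rw [h1, h2, transfer_diff_same_a hc.1.1 hc'.1.1 ha.1 hne, Finset.card_singleton]
    · rw [h2, h1, transfer_diff_same_a hc'.1.1 hc.1.1 ha.1 hne.symm, Finset.card_singleton]
  set S : Finset (PartitionVertex n) := insert lam (A.image (fun c => tvert n lam c a)) with hS
  have hclique : (partitionGraph n).IsClique (↑S : Set (PartitionVertex n)) := by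
    intro x hx y hy hxy
    rw [Finset.mem_coe, hS, Finset.mem_insert] at hx hy
    rcases hx with rfl | hx
    · rcases hy with rfl | hy
      · exact absurd rfl hxy
      · obtain ⟨c, hc, rfl⟩ := Finset.mem_image.mp hy
        exact hadjl c hc
    · obtain ⟨c, hc, rfl⟩ := Finset.mem_image.mp hx
      rcases hy with rfl | hy
      · exact (hadjl c hc).symm
      · obtain ⟨c', hc', rfl⟩ := Finset.mem_image.mp hy
        have hne : c ≠ c' := by
          rintro rfl
          exact hxy rfl
        exact hadjt c hc c' hc' hne
  have hinjA : Set.InjOn (fun c => tvert n lam c a) ↑A := by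
    intro c hc c' hc' h
    rw [Finset.mem_coe] at hc hc'
    have h1 := hcells c hc
    have h2 := hcells c' hc'
    rw [hAmem] at hc hc'
    try simp only at h
    exact transfer_inj_c hc.1.1 hc'.1.1 ha.1 (by rw [← h1, ← h2, h])
  have hlamnot : lam ∉ A.image (fun c => tvert n lam c a) := by
    intro h
    obtain ⟨c, hc, hEq⟩ := Finset.mem_image.mp h
    have h1 := hcells c hc
    rw [hAmem] at hc
    apply hc.2.2
    rw [← h1]
    try simp only at hEq
    rw [hEq]
  have hcard : S.card = (Cmax lam.1 a).ncard + 1 := by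
    rw [hS, Finset.card_insert_of_notMem hlamnot, Finset.card_image_of_injOn hinjA,
      hA, ← Set.ncard_eq_toFinset_card (Cmax lam.1 a) (cmax_finite lam.1 a)]
  exact le_csSup (dimLoc_bdd n lam) ⟨S, hclique, hcard, Finset.mem_insert_self _ _⟩

end LCAux
namespace LCAux

lemma exists_transfer {μ : YoungDiagram} (h2 : 2 ≤ μ.card) :
    ∃ c a, Removable μ c ∧ a ∈ Amax μ c := by
  by_cases h10 : (1, 0) ∈ μ
  · -- at least two rows: move the corner of the last row to the end of the first row
    set k := μ.colLen 0 with hk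
    have hk2 : 2 ≤ k := by
      have := YoungDiagram.mem_iff_lt_colLen.mp h10
      omega
    set m := μ.rowLen (k - 1) with hm
    have hckm : (k - 1, 0) ∈ μ := YoungDiagram.mem_iff_lt_colLen.mpr (by omega)
    have hm1 : 1 ≤ m := by
      have := YoungDiagram.mem_iff_lt_rowLen.mp hckm
      omega
    set r0 := μ.rowLen 0 with hr0
    have hcmem : (k - 1, m - 1) ∈ μ := YoungDiagram.mem_iff_lt_rowLen.mpr (by omega)
    have hanot : (0, r0) ∉ μ := by
      intro h
      have := YoungDiagram.mem_iff_lt_rowLen.mp h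
      omega
    have key : ∀ y : ℕ × ℕ, y ∈ μ → (k - 1, m - 1) ≤ y → y = (k - 1, m - 1) := by
      rintro ⟨y1, y2⟩ hy hle
      obtain ⟨hl1, hl2⟩ := Prod.mk_le_mk.mp hle
      have hy1 : y1 < k := YoungDiagram.mem_iff_lt_colLen.mp
        (μ.up_left_mem le_rfl (Nat.zero_le _) hy)
      have hy1' : y1 = k - 1 := by omega
      subst hy1'
      have hy2 : y2 < m := YoungDiagram.mem_iff_lt_rowLen.mp hy
      have hy2' : y2 = m - 1 := by omega
      subst hy2'
      rfl
    have hrem : Removable μ (k - 1, m - 1) := by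
      refine ⟨hcmem, ?_⟩
      intro y x hxy hy
      simp only [Finset.coe_erase, Set.mem_diff, Finset.mem_coe, Set.mem_singleton_iff,
        YoungDiagram.mem_cells] at hy ⊢
      refine ⟨μ.isLowerSet hxy hy.1, ?_⟩
      rintro rfl
      exact hy.2 (key y hy.1 hxy)
    have haddable : Addable μ (0, r0) := by
      refine ⟨hanot, ?_⟩
      intro y x hxy hy
      simp only [Finset.coe_insert, Set.mem_insert_iff, Finset.mem_coe,
        YoungDiagram.mem_cells] at hy ⊢
      rcases hy with rfl | hy
      · obtain ⟨x1, x2⟩ := x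
        obtain ⟨hl1, hl2⟩ := Prod.mk_le_mk.mp hxy
        have hx1 : x1 = 0 := Nat.le_zero.mp hl1
        subst hx1
        rcases Nat.lt_or_ge x2 r0 with h | h
        · exact Or.inr (YoungDiagram.mem_iff_lt_rowLen.mpr h)
        · left
          simp only [Prod.mk.injEq, true_and]
          omega
      · exact Or.inr (μ.isLowerSet hxy hy)
    have hadm : Admissible μ (k - 1, m - 1) (0, r0) := by
      constructor
      · intro y x hxy hy
        simp only [transferCells, Finset.coe_insert, Set.mem_insert_iff, Finset.coe_erase,
          Set.mem_diff, Finset.mem_coe, Set.mem_singleton_iff, YoungDiagram.mem_cells]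
          at hy ⊢
        rcases hy with rfl | ⟨hy1, hy2⟩
        · obtain ⟨x1, x2⟩ := x
          obtain ⟨hl1, hl2⟩ := Prod.mk_le_mk.mp hxy
          have hx1 : x1 = 0 := Nat.le_zero.mp hl1
          subst hx1
          rcases Nat.lt_or_ge x2 r0 with h | h
          · refine Or.inr ⟨YoungDiagram.mem_iff_lt_rowLen.mpr h, ?_⟩
            simp only [Prod.mk.injEq]
            omega
          · left
            simp only [Prod.mk.injEq, true_and]
            omega
        · refine Or.inr ⟨μ.isLowerSet hxy hy1, ?_⟩
          rintro rfl
          exact hy2 (key y hy1 hxy)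
      · intro hEq
        apply hanot
        rw [← YoungDiagram.mem_cells, ← hEq]
        exact Finset.mem_insert_self _ _
    exact ⟨(k - 1, m - 1), (0, r0), hrem, haddable, hadm⟩
  · -- a single row of length ≥ 2 : move its last cell to a new row
    have hrow : ∀ y : ℕ × ℕ, y ∈ μ → y.1 = 0 := by
      rintro ⟨y1, y2⟩ hy
      by_contra h
      exact h10 (μ.up_left_mem (by omega) (Nat.zero_le _) hy)
    set r0 := μ.rowLen 0 with hr0
    have hr02 : 2 ≤ r0 := by
      obtain ⟨x, hx, y, hy, hxy⟩ := Finset.one_lt_card.mp (h2 : 1 < μ.cells.card)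
      obtain ⟨x1, x2⟩ := x
      obtain ⟨y1, y2⟩ := y
      rw [YoungDiagram.mem_cells] at hx hy
      have hx0 : x1 = 0 := hrow _ hx
      have hy0 : y1 = 0 := hrow _ hy
      subst hx0; subst hy0
      have hx2 : x2 < r0 := YoungDiagram.mem_iff_lt_rowLen.mp hx
      have hy2 : y2 < r0 := YoungDiagram.mem_iff_lt_rowLen.mp hy
      have : x2 ≠ y2 := by
        intro h
        subst h
        exact hxy rfl
      omega
    have hcmem : (0, r0 - 1) ∈ μ := YoungDiagram.mem_iff_lt_rowLen.mpr (by omega)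
    have h00 : (0, 0) ∈ μ := YoungDiagram.mem_iff_lt_rowLen.mpr (by omega)
    have key : ∀ y : ℕ × ℕ, y ∈ μ → (0, r0 - 1) ≤ y → y = (0, r0 - 1) := by
      rintro ⟨y1, y2⟩ hy hle
      obtain ⟨hl1, hl2⟩ := Prod.mk_le_mk.mp hle
      have hy1 : y1 = 0 := hrow _ hy
      subst hy1
      have hy2 : y2 < r0 := YoungDiagram.mem_iff_lt_rowLen.mp hy
      have : y2 = r0 - 1 := by omega
      subst this
      rfl
    have hrem : Removable μ (0, r0 - 1) := by
      refine ⟨hcmem, ?_⟩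
      intro y x hxy hy
      simp only [Finset.coe_erase, Set.mem_diff, Finset.mem_coe, Set.mem_singleton_iff,
        YoungDiagram.mem_cells] at hy ⊢
      refine ⟨μ.isLowerSet hxy hy.1, ?_⟩
      rintro rfl
      exact hy.2 (key y hy.1 hxy)
    have haddable : Addable μ (1, 0) := by
      refine ⟨h10, ?_⟩
      intro y x hxy hy
      simp only [Finset.coe_insert, Set.mem_insert_iff, Finset.mem_coe,
        YoungDiagram.mem_cells] at hy ⊢
      rcases hy with rfl | hy
      · obtain ⟨x1, x2⟩ := x
        obtain ⟨hl1, hl2⟩ := Prod.mk_le_mk.mp hxy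
        have hx2 : x2 = 0 := Nat.le_zero.mp hl2
        subst hx2
        rcases Nat.lt_or_ge x1 1 with h | h
        · have : x1 = 0 := by omega
          subst this
          exact Or.inr h00
        · left
          simp only [Prod.mk.injEq, and_true]
          omega
      · exact Or.inr (μ.isLowerSet hxy hy)
    have hadm : Admissible μ (0, r0 - 1) (1, 0) := by
      constructor
      · intro y x hxy hy
        simp only [transferCells, Finset.coe_insert, Set.mem_insert_iff, Finset.coe_erase,
          Set.mem_diff, Finset.mem_coe, Set.mem_singleton_iff, YoungDiagram.mem_cells]
          at hy ⊢
        rcases hy with rfl | ⟨hy1, hy2⟩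
        · obtain ⟨x1, x2⟩ := x
          obtain ⟨hl1, hl2⟩ := Prod.mk_le_mk.mp hxy
          have hx2 : x2 = 0 := Nat.le_zero.mp hl2
          subst hx2
          rcases Nat.lt_or_ge x1 1 with h | h
          · have : x1 = 0 := by omega
            subst this
            refine Or.inr ⟨h00, ?_⟩
            simp only [Prod.mk.injEq, true_and]
            omega
          · left
            simp only [Prod.mk.injEq, and_true]
            omega
        · refine Or.inr ⟨μ.isLowerSet hxy hy1, ?_⟩
          rintro rfl
          exact hy2 (key y hy1 hxy)
      · intro hEq
        apply h10
        rw [← YoungDiagram.mem_cells, ← hEq]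
        exact Finset.mem_insert_self _ _
    exact ⟨(0, r0 - 1), (1, 0), hrem, haddable, hadm⟩

lemma one_le_starCap {μ : YoungDiagram} (h2 : 2 ≤ μ.card) : 1 ≤ starCap μ := by
  obtain ⟨c, a, hc, ha⟩ := exists_transfer h2
  have h1 : 0 < (Amax μ c).ncard := (Set.ncard_pos (amax_finite μ c)).mpr ⟨a, ha⟩
  exact le_trans h1 (le_starCap hc)

lemma dimLoc_eq {n : ℕ} (hn : 2 ≤ n) (lam : PartitionVertex n) :
    dimLoc n lam = max (starCap lam.1) (topCap lam.1) := by
  have h2 : 2 ≤ lam.1.card := by rw [lam.2]; exact hn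
  have hs1 := one_le_starCap h2
  apply le_antisymm
  · have h := dimLoc_le n lam
    rwa [max_eq_right (le_trans hs1 (le_max_left _ _))] at h
  · exact max_le (starCap_le_dimLoc n lam) (topCap_le_dimLoc n lam)

end LCAux
/-- For every `n ≥ 2` and `r ≥ 2`,
`L_{≥r}(n) = {λ ⊢ n : s(λ) ≥ r or t(λ) ≥ r}`; moreover, for every `r ≥ 1`,
`L_r(n) = {λ ⊢ n : max(1, s(λ), t(λ)) = r}`. -/
theorem layer_capacity_criterion (n : ℕ) (hn : 2 ≤ n) :
    (∀ r : ℕ, 2 ≤ r →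
      layerGe n r = {lam : PartitionVertex n | r ≤ starCap lam.1 ∨ r ≤ topCap lam.1}) ∧
    (∀ r : ℕ, 1 ≤ r →
      layer n r = {lam : PartitionVertex n |
        max 1 (max (starCap lam.1) (topCap lam.1)) = r}) := by
  constructor
  · intro r hr
    ext lam
    simp only [layerGe, Set.mem_setOf_eq, LCAux.dimLoc_eq hn lam, le_max_iff]
  · intro r hr
    ext lam
    have h2 : 2 ≤ lam.1.card := by rw [lam.2]; exact hn
    have hs1 := LCAux.one_le_starCap h2
    simp only [layer, Set.mem_setOf_eq, LCAux.dimLoc_eq hn lam]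
    rw [max_eq_right (le_trans hs1 (le_max_left _ _))]
end

section
/- For every r ≥ 2 and every n ≥ 2, there exists a partition λ of n with dim_loc(λ) ≥ r if and only if there exists a partition λ of n with s(λ) ≥ r or t(λ) ≥ r. Consequently, the threshold τ_≥(r) = min{n : L_{≥r}(n) ≠ ∅} equals the least n for which some partition of n admits at least r admissible transfers with a common removable corner or at least r admissible transfers with a common addable corner. -/
/-- The threshold `τ_≥(r) = min {n : L_{≥r}(n) ≠ ∅}`. -/
noncomputable def tauGe (r : ℕ) : ℕ := sInf {n | (layerGe n r).Nonempty}


/-! ### Auxiliary lemmas -/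

section AuxThreshold

open Finset

lemma aux_mem_transfer {μ : YoungDiagram} {c a x : ℕ × ℕ} :
    x ∈ transferCells μ c a ↔ x = a ∨ (x ∈ μ.cells ∧ x ≠ c) := by
  simp only [transferCells, Finset.mem_insert, Finset.mem_erase]
  tauto

lemma aux_c_not_mem_transfer {μ : YoungDiagram} {c a : ℕ × ℕ} (hc : c ∈ μ.cells)
    (ha : a ∉ μ.cells) : c ∉ transferCells μ c a := by
  rw [aux_mem_transfer]
  rintro (rfl | ⟨-, h⟩)
  exacts [ha hc, h rfl]

lemma aux_transfer_card {μ : YoungDiagram} {c a : ℕ × ℕ} (hc : c ∈ μ.cells) (ha : a ∉ μ.cells) :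
    (transferCells μ c a).card = μ.cells.card := by
  have h1 : a ∉ μ.cells.erase c := fun h => ha (Finset.mem_of_mem_erase h)
  have h2 := Finset.card_pos.mpr ⟨c, hc⟩
  rw [transferCells, Finset.card_insert_of_notMem h1, Finset.card_erase_of_mem hc]
  omega

lemma aux_sdiff_left {μ : YoungDiagram} {c a : ℕ × ℕ} (hc : c ∈ μ.cells) (ha : a ∉ μ.cells) :
    μ.cells \ transferCells μ c a = {c} := by
  ext x
  simp only [Finset.mem_sdiff, aux_mem_transfer, Finset.mem_singleton]
  constructor
  · rintro ⟨hx, h⟩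
    by_contra hne
    exact h (Or.inr ⟨hx, hne⟩)
  · rintro rfl
    refine ⟨hc, ?_⟩
    rintro (rfl | ⟨-, h⟩)
    exacts [ha hc, h rfl]

lemma aux_sdiff_right {μ : YoungDiagram} {c a : ℕ × ℕ} (hc : c ∈ μ.cells) (ha : a ∉ μ.cells) :
    transferCells μ c a \ μ.cells = {a} := by
  ext x
  simp only [Finset.mem_sdiff, aux_mem_transfer, Finset.mem_singleton]
  constructor
  · rintro ⟨(rfl | ⟨hx, -⟩), hxm⟩
    exacts [rfl, absurd hx hxm]
  · rintro rfl
    exact ⟨Or.inl rfl, ha⟩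

lemma aux_sdiff_same_c {μ : YoungDiagram} {c a₁ a₂ : ℕ × ℕ} (h1 : a₁ ∉ μ.cells)
    (h2 : a₂ ∉ μ.cells) (hne : a₁ ≠ a₂) :
    transferCells μ c a₁ \ transferCells μ c a₂ = {a₁} := by
  ext x
  simp only [Finset.mem_sdiff, aux_mem_transfer, Finset.mem_singleton]
  constructor
  · rintro ⟨(rfl | ⟨hx, hxc⟩), h⟩
    · rfl
    · exact absurd (Or.inr ⟨hx, hxc⟩) h
  · rintro rfl
    refine ⟨Or.inl rfl, ?_⟩
    rintro (rfl | ⟨hx, -⟩)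
    exacts [hne rfl, h1 hx]

lemma aux_sdiff_same_a {μ : YoungDiagram} {c₁ c₂ a : ℕ × ℕ} (h1 : c₁ ∈ μ.cells)
    (h2 : c₂ ∈ μ.cells) (ha : a ∉ μ.cells) (hne : c₁ ≠ c₂) :
    transferCells μ c₁ a \ transferCells μ c₂ a = {c₂} := by
  ext x
  simp only [Finset.mem_sdiff, aux_mem_transfer, Finset.mem_singleton]
  constructor
  · rintro ⟨(rfl | ⟨hx, hxc⟩), h⟩
    · exact absurd (Or.inl rfl) h
    · by_contra hne2
      exact h (Or.inr ⟨hx, hne2⟩)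
  · rintro rfl
    refine ⟨Or.inr ⟨h2, fun e => hne e.symm⟩, ?_⟩
    rintro (rfl | ⟨-, h⟩)
    exacts [ha h2, h rfl]

lemma aux_removable {μ : YoungDiagram} {c a : ℕ × ℕ} (hc : c ∈ μ.cells) (ha : a ∉ μ.cells)
    (hl : IsLowerSet (↑(transferCells μ c a) : Set (ℕ × ℕ))) : Removable μ c := by
  refine ⟨hc, ?_⟩
  intro p q hqp hp
  simp only [Finset.coe_erase, Set.mem_diff, Finset.mem_coe, Set.mem_singleton_iff] at hp ⊢
  obtain ⟨hpμ, hpc⟩ := hp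
  have hqμ : q ∈ μ.cells := μ.isLowerSet hqp hpμ
  refine ⟨hqμ, ?_⟩
  rintro rfl
  have hpt : p ∈ (↑(transferCells μ q a) : Set (ℕ × ℕ)) := by
    rw [Finset.mem_coe, aux_mem_transfer]
    exact Or.inr ⟨hpμ, hpc⟩
  have := hl hqp hpt
  rw [Finset.mem_coe] at this
  exact aux_c_not_mem_transfer hqμ ha this

lemma aux_addable {μ : YoungDiagram} {c a : ℕ × ℕ} (hc : c ∈ μ.cells) (ha : a ∉ μ.cells)
    (hl : IsLowerSet (↑(transferCells μ c a) : Set (ℕ × ℕ))) : Addable μ a := by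
  refine ⟨ha, ?_⟩
  intro p q hqp hp
  simp only [Finset.coe_insert, Set.mem_insert_iff, Finset.mem_coe] at hp ⊢
  rcases hp with rfl | hpμ
  · have hat : p ∈ (↑(transferCells μ c p) : Set (ℕ × ℕ)) := by
      rw [Finset.mem_coe, aux_mem_transfer]
      exact Or.inl rfl
    have hq := hl hqp hat
    rw [Finset.mem_coe, aux_mem_transfer] at hq
    rcases hq with rfl | ⟨hq, -⟩
    exacts [Or.inl rfl, Or.inr hq]
  · exact Or.inr (μ.isLowerSet hqp hpμ)

lemma aux_cell_lt {μ : YoungDiagram} {i j : ℕ} (h : (i, j) ∈ μ.cells) :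
    i < μ.card ∧ j < μ.card := by
  constructor
  · have hsub : ∀ k ∈ Finset.range (i + 1), (fun k => ((k, j) : ℕ × ℕ)) k ∈ μ.cells := by
      intro k hk
      exact μ.up_left_mem (Nat.lt_succ_iff.mp (Finset.mem_range.mp hk)) le_rfl h
    have hinj : Set.InjOn (fun k => ((k, j) : ℕ × ℕ)) ↑(Finset.range (i + 1)) := by
      intro x _ y _ hxy
      simpa using hxy
    have := Finset.card_le_card_of_injOn _ hsub hinj
    simpa using this
  · have hsub : ∀ k ∈ Finset.range (j + 1), (fun k => ((i, k) : ℕ × ℕ)) k ∈ μ.cells := by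
      intro k hk
      exact μ.up_left_mem le_rfl (Nat.lt_succ_iff.mp (Finset.mem_range.mp hk)) h
    have hinj : Set.InjOn (fun k => ((i, k) : ℕ × ℕ)) ↑(Finset.range (j + 1)) := by
      intro x _ y _ hxy
      simpa using hxy
    have := Finset.card_le_card_of_injOn _ hsub hinj
    simpa using this

lemma aux_addable_le {μ : YoungDiagram} {a : ℕ × ℕ} (h : Addable μ a) :
    a ≤ (μ.card, μ.card) := by
  obtain ⟨i, j⟩ := a
  obtain ⟨hnm, hl⟩ := h
  have hmem : ((i, j) : ℕ × ℕ) ∈ (↑(insert (i, j) μ.cells) : Set (ℕ × ℕ)) := by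
    simp
  have key : ∀ p : ℕ × ℕ, p ≤ (i, j) → p ≠ (i, j) → p ∈ μ.cells := by
    intro p hle hne
    have := hl hle hmem
    simp only [Finset.coe_insert, Set.mem_insert_iff, Finset.mem_coe] at this
    tauto
  constructor
  · rcases Nat.eq_zero_or_pos i with rfl | hi
    · exact Nat.zero_le _
    · have := (aux_cell_lt (key (i - 1, j) (Prod.mk_le_mk.mpr ⟨by omega, le_rfl⟩)
        (by intro e; rw [Prod.mk.injEq] at e; omega))).1
      omega
  · rcases Nat.eq_zero_or_pos j with rfl | hj
    · exact Nat.zero_le _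
    · have := (aux_cell_lt (key (i, j - 1) (Prod.mk_le_mk.mpr ⟨le_rfl, by omega⟩)
        (by intro e; rw [Prod.mk.injEq] at e; omega))).2
      omega

lemma aux_Amax_subset (μ : YoungDiagram) (c : ℕ × ℕ) :
    Amax μ c ⊆ Set.Iic ((μ.card, μ.card) : ℕ × ℕ) := fun _ ha => aux_addable_le ha.1

lemma aux_Amax_finite (μ : YoungDiagram) (c : ℕ × ℕ) : (Amax μ c).Finite :=
  (Set.finite_Iic ((μ.card, μ.card) : ℕ × ℕ)).subset (aux_Amax_subset μ c)

lemma aux_Cmax_subset (μ : YoungDiagram) (a : ℕ × ℕ) :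
    Cmax μ a ⊆ ↑μ.cells := fun _ hc => hc.1.1

lemma aux_Cmax_finite (μ : YoungDiagram) (a : ℕ × ℕ) : (Cmax μ a).Finite :=
  μ.cells.finite_toSet.subset (aux_Cmax_subset μ a)

lemma aux_starCap_bdd (μ : YoungDiagram) :
    BddAbove {k | ∃ c : ℕ × ℕ, Removable μ c ∧ (Amax μ c).ncard = k} := by
  refine ⟨(Set.Iic ((μ.card, μ.card) : ℕ × ℕ)).ncard, ?_⟩
  rintro k ⟨c, -, rfl⟩
  exact Set.ncard_le_ncard (aux_Amax_subset μ c) (Set.finite_Iic _)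

lemma aux_topCap_bdd (μ : YoungDiagram) :
    BddAbove {k | ∃ a : ℕ × ℕ, Addable μ a ∧ (Cmax μ a).ncard = k} := by
  refine ⟨μ.card, ?_⟩
  rintro k ⟨a, -, rfl⟩
  calc (Cmax μ a).ncard ≤ (↑μ.cells : Set (ℕ × ℕ)).ncard :=
        Set.ncard_le_ncard (aux_Cmax_subset μ a) μ.cells.finite_toSet
    _ = μ.card := Set.ncard_coe_finset _

lemma aux_finite (n : ℕ) : Finite (PartitionVertex n) := by
  refine Finite.of_injective
    (fun lam => (⟨lam.1.cells, ?_⟩ :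
      ((Finset.range n ×ˢ Finset.range n).powerset : Finset (Finset (ℕ × ℕ))))) ?_
  · rw [Finset.mem_powerset]
    rintro ⟨i, j⟩ hx
    have := aux_cell_lt hx
    rw [lam.2] at this
    simp [Finset.mem_product, this.1, this.2]
  · intro x y hxy
    apply Subtype.ext
    apply YoungDiagram.ext
    exact congrArg Subtype.val hxy

lemma aux_dimLoc_bdd (n : ℕ) (lam : PartitionVertex n) :
    BddAbove {d : ℕ | ∃ s : Finset (PartitionVertex n),
      (partitionGraph n).IsClique (↑s : Set (PartitionVertex n)) ∧ s.card = d + 1 ∧ lam ∈ s} := by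
  have : Finite (PartitionVertex n) := aux_finite n
  have : Fintype (PartitionVertex n) := Fintype.ofFinite _
  refine ⟨Fintype.card (PartitionVertex n), ?_⟩
  rintro d ⟨s, -, hcard, -⟩
  have h1 := s.card_le_univ
  omega

lemma aux_vertex_ne {n : ℕ} {x y : PartitionVertex n} (h : x.1.cells ≠ y.1.cells) : x ≠ y :=
  fun e => h (by rw [e])

lemma aux_star_clique (n : ℕ) (lam : PartitionVertex n) (c : ℕ × ℕ) (hc : c ∈ lam.1.cells)
    (F : Finset (ℕ × ℕ)) (hF : ∀ a ∈ F, Addable lam.1 a ∧ Admissible lam.1 c a) :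
    F.card ≤ dimLoc n lam := by
  classical
  have hnotmem : ∀ a ∈ F, a ∉ lam.1.cells := fun a ha => (hF a ha).1.1
  let g : {a // a ∈ F} → PartitionVertex n := fun a =>
    ⟨⟨transferCells lam.1 c a.1, (hF a.1 a.2).2.1⟩, by
      show (transferCells lam.1 c a.1).card = n
      rw [aux_transfer_card hc (hnotmem a.1 a.2)]
      exact lam.2⟩
  have hgcells : ∀ a : {a // a ∈ F}, (g a).1.cells = transferCells lam.1 c a.1 := fun _ => rfl
  have hginj : Function.Injective g := by
    intro a b hab
    have h1 : transferCells lam.1 c a.1 = transferCells lam.1 c b.1 := by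
      have := congrArg (fun v => v.1.cells) hab
      simpa [hgcells] using this
    have ha1 : (a.1 : ℕ × ℕ) ∈ transferCells lam.1 c b.1 := by
      rw [← h1, aux_mem_transfer]; exact Or.inl rfl
    rw [aux_mem_transfer] at ha1
    rcases ha1 with h | ⟨h, -⟩
    · exact Subtype.ext h
    · exact absurd h (hnotmem a.1 a.2)
  have hlamnot : lam ∉ Finset.image g F.attach := by
    simp only [Finset.mem_image, not_exists]
    rintro a ⟨-, hga⟩
    have : c ∈ transferCells lam.1 c a.1 := by
      rw [← hgcells a, hga]; exact hc
    exact aux_c_not_mem_transfer hc (hnotmem a.1 a.2) this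
  set s : Finset (PartitionVertex n) := insert lam (Finset.image g F.attach) with hs
  have hadjlam : ∀ a : {a // a ∈ F}, (partitionGraph n).Adj lam (g a) := by
    intro a
    refine ⟨aux_vertex_ne ?_, ?_, ?_⟩
    · intro h
      have : c ∈ transferCells lam.1 c a.1 := by rw [← hgcells a, ← h]; exact hc
      exact aux_c_not_mem_transfer hc (hnotmem a.1 a.2) this
    · rw [hgcells, aux_sdiff_left hc (hnotmem a.1 a.2)]; simp
    · rw [hgcells, aux_sdiff_right hc (hnotmem a.1 a.2)]; simp
  have hclique : (partitionGraph n).IsClique (↑s : Set (PartitionVertex n)) := by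
    intro x hx y hy hxy
    rw [hs, Finset.coe_insert, Set.mem_insert_iff, Finset.mem_coe, Finset.mem_image] at hx hy
    rcases hx with rfl | ⟨a, -, rfl⟩ <;> rcases hy with rfl | ⟨b, -, rfl⟩
    · exact absurd rfl hxy
    · exact hadjlam b
    · exact (hadjlam a).symm
    · have hab : a.1 ≠ b.1 := fun h => hxy (congrArg g (Subtype.ext h))
      refine ⟨hxy, ?_, ?_⟩
      · rw [hgcells, hgcells, aux_sdiff_same_c (μ := lam.1) (c := c)
          (hnotmem a.1 a.2) (hnotmem b.1 b.2) hab]; simp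
      · rw [hgcells, hgcells, aux_sdiff_same_c (μ := lam.1) (c := c)
          (hnotmem b.1 b.2) (hnotmem a.1 a.2) (Ne.symm hab)]; simp
  have hcard : s.card = F.card + 1 := by
    rw [hs, Finset.card_insert_of_notMem hlamnot,
      Finset.card_image_of_injective _ hginj, Finset.card_attach]
  exact le_csSup (aux_dimLoc_bdd n lam) ⟨s, hclique, hcard, Finset.mem_insert_self _ _⟩

lemma aux_top_clique (n : ℕ) (lam : PartitionVertex n) (a : ℕ × ℕ) (ha : a ∉ lam.1.cells)
    (F : Finset (ℕ × ℕ)) (hF : ∀ c ∈ F, Removable lam.1 c ∧ Admissible lam.1 c a) :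
    F.card ≤ dimLoc n lam := by
  classical
  have hmem : ∀ c ∈ F, c ∈ lam.1.cells := fun c hc => (hF c hc).1.1
  let g : {c // c ∈ F} → PartitionVertex n := fun c =>
    ⟨⟨transferCells lam.1 c.1 a, (hF c.1 c.2).2.1⟩, by
      show (transferCells lam.1 c.1 a).card = n
      rw [aux_transfer_card (hmem c.1 c.2) ha]
      exact lam.2⟩
  have hgcells : ∀ c : {c // c ∈ F}, (g c).1.cells = transferCells lam.1 c.1 a := fun _ => rfl
  have hginj : Function.Injective g := by
    intro x y hxy
    have h1 : transferCells lam.1 x.1 a = transferCells lam.1 y.1 a := by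
      have := congrArg (fun v => v.1.cells) hxy
      simpa [hgcells] using this
    by_contra hne
    have hxyne : x.1 ≠ y.1 := fun h => hne (Subtype.ext h)
    have hy1 : (y.1 : ℕ × ℕ) ∈ transferCells lam.1 x.1 a := by
      rw [aux_mem_transfer]
      exact Or.inr ⟨hmem y.1 y.2, Ne.symm hxyne⟩
    rw [h1] at hy1
    exact aux_c_not_mem_transfer (hmem y.1 y.2) ha hy1
  have hlamnot : lam ∉ Finset.image g F.attach := by
    simp only [Finset.mem_image, not_exists]
    rintro c ⟨-, hgc⟩
    have : a ∈ lam.1.cells := by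
      rw [← hgc, hgcells, aux_mem_transfer] at ha
      push_neg at ha
      exact absurd rfl ha.1
    exact ha this
  set s : Finset (PartitionVertex n) := insert lam (Finset.image g F.attach) with hs
  have hadjlam : ∀ c : {c // c ∈ F}, (partitionGraph n).Adj lam (g c) := by
    intro c
    refine ⟨aux_vertex_ne ?_, ?_, ?_⟩
    · intro h
      have : c.1 ∈ transferCells lam.1 c.1 a := by rw [← hgcells c, ← h]; exact hmem c.1 c.2
      exact aux_c_not_mem_transfer (hmem c.1 c.2) ha this
    · rw [hgcells, aux_sdiff_left (hmem c.1 c.2) ha]; simp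
    · rw [hgcells, aux_sdiff_right (hmem c.1 c.2) ha]; simp
  have hclique : (partitionGraph n).IsClique (↑s : Set (PartitionVertex n)) := by
    intro x hx y hy hxy
    rw [hs, Finset.coe_insert, Set.mem_insert_iff, Finset.mem_coe, Finset.mem_image] at hx hy
    rcases hx with rfl | ⟨cx, -, rfl⟩ <;> rcases hy with rfl | ⟨cy, -, rfl⟩
    · exact absurd rfl hxy
    · exact hadjlam cy
    · exact (hadjlam cx).symm
    · have hab : cx.1 ≠ cy.1 := fun h => hxy (congrArg g (Subtype.ext h))
      refine ⟨hxy, ?_, ?_⟩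
      · rw [hgcells, hgcells, aux_sdiff_same_a (μ := lam.1)
          (hmem cx.1 cx.2) (hmem cy.1 cy.2) ha hab]; simp
      · rw [hgcells, hgcells, aux_sdiff_same_a (μ := lam.1)
          (hmem cy.1 cy.2) (hmem cx.1 cx.2) ha (Ne.symm hab)]; simp
  have hcard : s.card = F.card + 1 := by
    rw [hs, Finset.card_insert_of_notMem hlamnot,
      Finset.card_image_of_injective _ hginj, Finset.card_attach]
  exact le_csSup (aux_dimLoc_bdd n lam) ⟨s, hclique, hcard, Finset.mem_insert_self _ _⟩

lemma aux_cap_to_dim (n r : ℕ) (hr : 1 ≤ r) (lam : PartitionVertex n)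
    (h : r ≤ starCap lam.1 ∨ r ≤ topCap lam.1) : r ≤ dimLoc n lam := by
  rcases h with h | h
  · have hbdd := aux_starCap_bdd lam.1
    have hne : {k | ∃ c : ℕ × ℕ, Removable lam.1 c ∧ (Amax lam.1 c).ncard = k}.Nonempty := by
      by_contra hcon
      rw [Set.not_nonempty_iff_eq_empty] at hcon
      rw [starCap, hcon, csSup_empty] at h
      simp at h
      omega
    obtain ⟨c, hcrem, hcard⟩ := Nat.sSup_mem hne hbdd
    have hfin := aux_Amax_finite lam.1 c
    have hle := aux_star_clique n lam c hcrem.1 hfin.toFinset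
      (fun a ha => hfin.mem_toFinset.mp ha)
    rw [← Set.ncard_eq_toFinset_card _ hfin, hcard] at hle
    exact le_trans h hle
  · have hbdd := aux_topCap_bdd lam.1
    have hne : {k | ∃ a : ℕ × ℕ, Addable lam.1 a ∧ (Cmax lam.1 a).ncard = k}.Nonempty := by
      by_contra hcon
      rw [Set.not_nonempty_iff_eq_empty] at hcon
      rw [topCap, hcon, csSup_empty] at h
      simp at h
      omega
    obtain ⟨a, hadd, hcard⟩ := Nat.sSup_mem hne hbdd
    have hfin := aux_Cmax_finite lam.1 a
    have hle := aux_top_clique n lam a hadd.1 hfin.toFinset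
      (fun c hc => hfin.mem_toFinset.mp hc)
    rw [← Set.ncard_eq_toFinset_card _ hfin, hcard] at hle
    exact le_trans h hle

lemma aux_dim_to_cap (n r : ℕ) (hr : 1 ≤ r) (lam : PartitionVertex n)
    (h : r ≤ dimLoc n lam) :
    ∃ mu : PartitionVertex n, r ≤ starCap mu.1 ∨ r ≤ topCap mu.1 := by
  classical
  have hbdd := aux_dimLoc_bdd n lam
  have hne : {d : ℕ | ∃ s : Finset (PartitionVertex n),
      (partitionGraph n).IsClique (↑s : Set (PartitionVertex n)) ∧ s.card = d + 1 ∧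
        lam ∈ s}.Nonempty := by
    by_contra hcon
    rw [Set.not_nonempty_iff_eq_empty] at hcon
    rw [dimLoc, hcon, csSup_empty] at h
    simp at h
    omega
  obtain ⟨K, hK, hKcard, hlamK⟩ := Nat.sSup_mem hne hbdd
  rw [← dimLoc] at hKcard
  set T := K.erase lam with hT
  have hTcard : r ≤ T.card := by
    rw [hT, Finset.card_erase_of_mem hlamK, hKcard]
    omega
  have hadjK : ∀ x ∈ K, ∀ y ∈ K, x ≠ y → (partitionGraph n).Adj x y := by
    intro x hx y hy hxy
    exact hK (Finset.mem_coe.mpr hx) (Finset.mem_coe.mpr hy) hxy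
  have hTadj : ∀ ν ∈ T, (partitionGraph n).Adj lam ν := by
    intro ν hν
    exact hadjK lam hlamK ν (Finset.mem_of_mem_erase hν)
      (fun e => (Finset.mem_erase.mp hν).1 e.symm)
  have hex : ∀ ν ∈ T, ∃ ca : (ℕ × ℕ) × (ℕ × ℕ), ca.1 ∈ lam.1.cells ∧ ca.2 ∉ lam.1.cells ∧
      ν.1.cells = transferCells lam.1 ca.1 ca.2 := by
    intro ν hν
    obtain ⟨-, h1, h2⟩ := hTadj ν hν
    obtain ⟨c, hc⟩ := Finset.card_eq_one.mp h1
    obtain ⟨a, ha⟩ := Finset.card_eq_one.mp h2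
    have hcmem : c ∈ lam.1.cells ∧ c ∉ ν.1.cells := by
      have : c ∈ lam.1.cells \ ν.1.cells := hc ▸ Finset.mem_singleton_self c
      exact Finset.mem_sdiff.mp this
    have hamem : a ∈ ν.1.cells ∧ a ∉ lam.1.cells := by
      have : a ∈ ν.1.cells \ lam.1.cells := ha ▸ Finset.mem_singleton_self a
      exact Finset.mem_sdiff.mp this
    refine ⟨(c, a), hcmem.1, hamem.2, ?_⟩
    have e1 : ν.1.cells = (ν.1.cells \ lam.1.cells) ∪ (ν.1.cells ∩ lam.1.cells) :=
      (Finset.sdiff_union_inter _ _).symm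
    have e2 : ν.1.cells ∩ lam.1.cells = lam.1.cells \ {c} := by
      rw [← hc, Finset.sdiff_sdiff_self_left, Finset.inter_comm]
    rw [e1, e2, ha]
    rw [transferCells, Finset.insert_eq, Finset.erase_eq]
  choose! f hf1 hf2 hf3 using hex
  have hmemT : ∀ ν ∈ T, ν ∈ K := fun ν hν => Finset.mem_of_mem_erase hν
  have hνlam : ∀ ν ∈ T, ν ≠ lam := fun ν hν => (Finset.mem_erase.mp hν).1
  have hcells_ne : ∀ ν ∈ T, ν.1.cells ≠ lam.1.cells := by
    intro ν hν h
    exact hνlam ν hν (Subtype.ext (YoungDiagram.ext h))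
  have hpair : ∀ ν₁ ∈ T, ∀ ν₂ ∈ T, ν₁ ≠ ν₂ → (f ν₁).1 = (f ν₂).1 ∨ (f ν₁).2 = (f ν₂).2 := by
    intro ν₁ h₁ ν₂ h₂ hne'
    by_contra hcon
    push_neg at hcon
    obtain ⟨hcne, hane⟩ := hcon
    have hadj := hadjK ν₁ (hmemT ν₁ h₁) ν₂ (hmemT ν₂ h₂) hne'
    have hsub : ({(f ν₁).2, (f ν₂).1} : Finset (ℕ × ℕ)) ⊆ ν₁.1.cells \ ν₂.1.cells := by
      intro x hx
      rw [Finset.mem_insert, Finset.mem_singleton] at hx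
      rw [Finset.mem_sdiff, hf3 ν₁ h₁, hf3 ν₂ h₂]
      rcases hx with rfl | rfl
      · constructor
        · rw [aux_mem_transfer]; exact Or.inl rfl
        · rw [aux_mem_transfer]
          rintro (h | ⟨h, -⟩)
          exacts [hane h, hf2 ν₁ h₁ h]
      · constructor
        · rw [aux_mem_transfer]
          exact Or.inr ⟨hf1 ν₂ h₂, fun e => hcne e.symm⟩
        · exact aux_c_not_mem_transfer (hf1 ν₂ h₂) (hf2 ν₂ h₂)
    have h2 : ({(f ν₁).2, (f ν₂).1} : Finset (ℕ × ℕ)).card = 2 := by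
      rw [Finset.card_pair]
      intro e
      exact hf2 ν₁ h₁ (e ▸ hf1 ν₂ h₂)
    have := Finset.card_le_card hsub
    rw [h2, hadj.2.1] at this
    omega
  obtain ⟨ν₀, hν₀⟩ := Finset.card_pos.mp (lt_of_lt_of_le hr hTcard)
  refine ⟨lam, ?_⟩
  by_cases hcc : ∀ ν ∈ T, (f ν).1 = (f ν₀).1
  · -- common removable corner: star capacity
    left
    set c₀ := (f ν₀).1 with hc₀
    have hAmem : ∀ ν ∈ T, (f ν).2 ∈ Amax lam.1 c₀ := by
      intro ν hν
      have hlow : IsLowerSet (↑(transferCells lam.1 c₀ (f ν).2) : Set (ℕ × ℕ)) := by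
        rw [← hcc ν hν, ← hf3 ν hν]
        exact ν.1.isLowerSet
      refine ⟨aux_addable (c := c₀) (hcc ν hν ▸ hf1 ν hν) (hf2 ν hν) hlow, hlow, ?_⟩
      rw [← hcc ν hν, ← hf3 ν hν]
      exact hcells_ne ν hν
    have hinj : Set.InjOn (fun ν => (f ν).2) ↑T := by
      intro ν₁ h₁ ν₂ h₂ he
      rw [Finset.mem_coe] at h₁ h₂
      have he' : (f ν₁).2 = (f ν₂).2 := he
      apply Subtype.ext
      apply YoungDiagram.ext
      rw [hf3 ν₁ h₁, hf3 ν₂ h₂, hcc ν₁ h₁, hcc ν₂ h₂, he']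
    have hsub : ↑(T.image (fun ν => (f ν).2)) ⊆ Amax lam.1 c₀ := by
      intro a ha
      rw [Finset.coe_image, Set.mem_image] at ha
      obtain ⟨ν, hν, rfl⟩ := ha
      exact hAmem ν (Finset.mem_coe.mp hν)
    have hA : r ≤ (Amax lam.1 c₀).ncard := by
      calc r ≤ T.card := hTcard
        _ = (T.image (fun ν => (f ν).2)).card := (Finset.card_image_of_injOn hinj).symm
        _ = (↑(T.image (fun ν => (f ν).2)) : Set (ℕ × ℕ)).ncard :=
            (Set.ncard_coe_finset _).symm
        _ ≤ (Amax lam.1 c₀).ncard :=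
            Set.ncard_le_ncard hsub (aux_Amax_finite lam.1 c₀)
    have hrem : Removable lam.1 c₀ := by
      refine aux_removable (a := (f ν₀).2) (hf1 ν₀ hν₀) (hf2 ν₀ hν₀) ?_
      rw [← hf3 ν₀ hν₀]
      exact ν₀.1.isLowerSet
    exact le_trans hA (le_csSup (aux_starCap_bdd lam.1) ⟨c₀, hrem, rfl⟩)
  · -- common addable corner: top capacity
    right
    push_neg at hcc
    obtain ⟨ν₁, hν₁T, hc01⟩ := hcc
    have hν₀ν₁ : ν₀ ≠ ν₁ := by
      rintro rfl
      exact hc01 rfl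
    have ha01 : (f ν₀).2 = (f ν₁).2 := by
      rcases hpair ν₀ hν₀ ν₁ hν₁T hν₀ν₁ with h | h
      · exact absurd h.symm hc01
      · exact h
    have haa : ∀ ν ∈ T, (f ν).2 = (f ν₀).2 := by
      intro ν hν
      by_cases e0 : ν = ν₀
      · rw [e0]
      by_cases e1 : ν = ν₁
      · rw [e1, ← ha01]
      rcases hpair ν hν ν₀ hν₀ e0 with h0 | h0
      · rcases hpair ν hν ν₁ hν₁T e1 with h1 | h1
        · exact absurd (h0.symm.trans h1) (fun e => hc01 e.symm)
        · rw [h1, ← ha01]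
      · exact h0
    set a₀ := (f ν₀).2 with ha₀
    have hCmem : ∀ ν ∈ T, (f ν).1 ∈ Cmax lam.1 a₀ := by
      intro ν hν
      have hlow : IsLowerSet (↑(transferCells lam.1 (f ν).1 a₀) : Set (ℕ × ℕ)) := by
        rw [← haa ν hν, ← hf3 ν hν]
        exact ν.1.isLowerSet
      refine ⟨aux_removable (a := a₀) (hf1 ν hν) (haa ν hν ▸ hf2 ν hν) hlow, hlow, ?_⟩
      rw [← haa ν hν, ← hf3 ν hν]
      exact hcells_ne ν hν
    have hinj : Set.InjOn (fun ν => (f ν).1) ↑T := by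
      intro ν₁' h₁ ν₂' h₂ he
      rw [Finset.mem_coe] at h₁ h₂
      have he' : (f ν₁').1 = (f ν₂').1 := he
      apply Subtype.ext
      apply YoungDiagram.ext
      rw [hf3 ν₁' h₁, hf3 ν₂' h₂, haa ν₁' h₁, haa ν₂' h₂, he']
    have hsub : ↑(T.image (fun ν => (f ν).1)) ⊆ Cmax lam.1 a₀ := by
      intro c hcm
      rw [Finset.coe_image, Set.mem_image] at hcm
      obtain ⟨ν, hν, rfl⟩ := hcm
      exact hCmem ν (Finset.mem_coe.mp hν)
    have hC : r ≤ (Cmax lam.1 a₀).ncard := by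
      calc r ≤ T.card := hTcard
        _ = (T.image (fun ν => (f ν).1)).card := (Finset.card_image_of_injOn hinj).symm
        _ = (↑(T.image (fun ν => (f ν).1)) : Set (ℕ × ℕ)).ncard :=
            (Set.ncard_coe_finset _).symm
        _ ≤ (Cmax lam.1 a₀).ncard :=
            Set.ncard_le_ncard hsub (aux_Cmax_finite lam.1 a₀)
    have hadd : Addable lam.1 a₀ := by
      refine aux_addable (c := (f ν₀).1) (hf1 ν₀ hν₀) (hf2 ν₀ hν₀) ?_
      rw [← hf3 ν₀ hν₀]
      exact ν₀.1.isLowerSet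
    exact le_trans hC (le_csSup (aux_topCap_bdd lam.1) ⟨a₀, hadd, rfl⟩)

end AuxThreshold

/-- For every `r ≥ 2` and every `n ≥ 2`, there exists `λ ⊢ n` with
`dim_loc(λ) ≥ r` iff there exists `λ ⊢ n` with `s(λ) ≥ r` or `t(λ) ≥ r`. Consequently,
`τ_≥(r)` equals the least `n` for which some partition of `n` admits at least `r` admissible
transfers with a common removable corner or at least `r` admissible transfers with a common
addable corner. -/
theorem threshold_reduction (r : ℕ) (hr : 2 ≤ r) :
    (∀ n : ℕ, 2 ≤ n →
      ((∃ lam : PartitionVertex n, r ≤ dimLoc n lam) ↔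
        (∃ lam : PartitionVertex n, r ≤ starCap lam.1 ∨ r ≤ topCap lam.1))) ∧
    tauGe r = sInf {n : ℕ | ∃ lam : PartitionVertex n,
      r ≤ starCap lam.1 ∨ r ≤ topCap lam.1} := by
  have main : ∀ n : ℕ, (∃ lam : PartitionVertex n, r ≤ dimLoc n lam) ↔
      (∃ lam : PartitionVertex n, r ≤ starCap lam.1 ∨ r ≤ topCap lam.1) := by
    intro n
    constructor
    · rintro ⟨lam, h⟩
      exact aux_dim_to_cap n r (by omega) lam h
    · rintro ⟨lam, h⟩
      exact ⟨lam, aux_cap_to_dim n r (by omega) lam h⟩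
  refine ⟨fun n _ => main n, ?_⟩
  rw [tauGe]
  congr 1
  ext n
  simpa [layerGe, Set.Nonempty, Set.mem_setOf_eq] using main n
end
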